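/- arXiv:1902.08006 — 5 statements merged into one kernel-verified Lean document; each statement's English description precedes it below -/
import Mathlib

section
/- Let A and B be countable equivalence structures where [5:ω] denotes the structure with infinitely many equivalence classes of size 5 and no others, and [6:ω] likewise with size 6. Then there is a learner M (an arbitrary function from finite informant sequences to conjectures) that InfEx-learns both A and B up to isomorphism: on every informant for any ω-presentation of A or B, M converges to a correct isomorphism-type conjecture. -/
open Set

/-- An equivalence structure on ℕ. -/
structure EqStruct where
  rel : ℕ → ℕ → Prop
  equiv : Equivalence rel

namespace EqStruct

/-- Isomorphism of equivalence structures. -/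
def Isom (A B : EqStruct) : Prop :=
  ∃ f : ℕ → ℕ, Function.Bijective f ∧ ∀ x y, A.rel x y ↔ B.rel (f x) (f y)

/-- Embedding of equivalence structures. -/
def Embeds (A B : EqStruct) : Prop :=
  ∃ f : ℕ → ℕ, Function.Injective f ∧ ∀ x y, A.rel x y ↔ B.rel (f x) (f y)

/-- Bi-embeddability. -/
def Biembed (A B : EqStruct) : Prop := A.Embeds B ∧ B.Embeds A

/-- The equivalence class of `x`. -/
def classOf (A : EqStruct) (x : ℕ) : Set ℕ := {y | A.rel x y}

/-- The number of equivalence classes of size `k` (counted in `ℕ∞`). -/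
noncomputable def numClasses (A : EqStruct) (k : ℕ∞) : ℕ∞ :=
  {C : Set ℕ | (∃ x, C = A.classOf x) ∧ C.encard = k}.encard

/-- `A` finitely embeds into `B`: every finite substructure `A[s]` embeds into `B`. -/
def FinEmbeds (A B : EqStruct) : Prop :=
  ∀ s : ℕ, ∃ f : ℕ → ℕ, Set.InjOn f (Set.Iio s) ∧
    ∀ x < s, ∀ y < s, (A.rel x y ↔ B.rel (f x) (f y))

end EqStruct

/-- An informant for a structure: lists every pair, labelled correctly. -/
def IsInformant (A : EqStruct) (I : ℕ → (ℕ × ℕ) × Bool) : Prop :=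
  (∀ p : ℕ × ℕ, ∃ n, (I n).1 = p) ∧
  (∀ n, ((I n).2 = true ↔ A.rel (I n).1.1 (I n).1.2))

/-- A learner from informants: `none` is the `?` symbol. -/
abbrev Learner := List ((ℕ × ℕ) × Bool) → Option ℕ

/-- The initial segment `I[n]`. -/
def seg (I : ℕ → (ℕ × ℕ) × Bool) (n : ℕ) : List ((ℕ × ℕ) × Bool) :=
  (List.range n).map I

/-- `M` InfEx-learns `A` up to `sim`, with hypotheses indices into `Me`. -/
def InfExLearns (Me : ℕ → EqStruct) (sim : EqStruct → EqStruct → Prop)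
    (M : Learner) (A : EqStruct) : Prop :=
  ∀ B, B.Isom A → ∀ I, IsInformant B I →
    ∃ e, sim (Me e) B ∧ ∃ N, ∀ n ≥ N, M (seg I n) = some e

/-- `M` finitely learns `A` from informants up to `sim`. -/
def InfFinLearns (Me : ℕ → EqStruct) (sim : EqStruct → EqStruct → Prop)
    (M : Learner) (A : EqStruct) : Prop :=
  ∀ B, B.Isom A → ∀ I, IsInformant B I →
    ∃ e, sim (Me e) B ∧ (∃ n, M (seg I n) = some e) ∧
      ∀ n e', M (seg I n) = some e' → e' = e

/-- A text for a structure: enumerates exactly the related pairs (`none` is pause). -/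
def IsText (A : EqStruct) (T : ℕ → Option (ℕ × ℕ)) : Prop :=
  ∀ x y, A.rel x y ↔ ∃ n, T n = some (x, y)

/-- A learner from texts. -/
abbrev TxtLearner := List (Option (ℕ × ℕ)) → Option ℕ

/-- The initial segment `T[n]` of a text. -/
def tseg (T : ℕ → Option (ℕ × ℕ)) (n : ℕ) : List (Option (ℕ × ℕ)) :=
  (List.range n).map T

/-- `M` TxtEx-learns `A` up to `sim`. -/
def TxtExLearns (Me : ℕ → EqStruct) (sim : EqStruct → EqStruct → Prop)
    (M : TxtLearner) (A : EqStruct) : Prop :=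
  ∀ B, B.Isom A → ∀ T, IsText B T →
    ∃ e, sim (Me e) B ∧ ∃ N, ∀ n ≥ N, M (tseg T n) = some e

/-- `σ` describes a finite part of `A`: it is an initial segment of an informant for `A`. -/
def DescribesPart (A : EqStruct) (σ : List ((ℕ × ℕ) × Bool)) : Prop :=
  ∃ I, IsInformant A I ∧ σ = seg I σ.length

section Aux

open Classical in
/-- The learner: guess `eB` iff we have seen 6 pairwise-related elements. -/
noncomputable def mkLearner (eA eB : ℕ) : Learner := fun σ =>
  if ∃ s : Finset ℕ, s.card = 6 ∧ ∀ x ∈ s, ∀ y ∈ s, ((x, y), true) ∈ σ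
  then some eB else some eA

lemma isom_symm {A B : EqStruct} (h : A.Isom B) : B.Isom A := by
  obtain ⟨f, hf, hrel⟩ := h
  let e := Equiv.ofBijective f hf
  refine ⟨e.symm, e.symm.bijective, fun x y => ?_⟩
  have hx : f (e.symm x) = x := e.apply_symm_apply x
  have hy : f (e.symm y) = y := e.apply_symm_apply y
  constructor
  · intro h; exact (hrel _ _).mpr (by rwa [hx, hy])
  · intro h; have h2 := (hrel _ _).mp h; rwa [hx, hy] at h2

lemma isom_trans {A B C : EqStruct} (h1 : A.Isom B) (h2 : B.Isom C) : A.Isom C := by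
  obtain ⟨f, hf, hrf⟩ := h1
  obtain ⟨g, hg, hrg⟩ := h2
  exact ⟨g ∘ f, hg.comp hf, fun x y => (hrf x y).trans (hrg (f x) (f y))⟩

lemma classes_card {A C : EqStruct} (h : C.Isom A) (k : ℕ∞)
    (hA : ∀ x, (A.classOf x).encard = k) : ∀ x, (C.classOf x).encard = k := by
  obtain ⟨f, hf, hrel⟩ := h
  intro x
  have himg : f '' (C.classOf x) = A.classOf (f x) := by
    ext z
    constructor
    · rintro ⟨y, hy, rfl⟩; exact (hrel x y).mp hy
    · intro hz
      obtain ⟨y, rfl⟩ := hf.2 z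
      exact ⟨y, (hrel x y).mpr hz, rfl⟩
  have him := Set.InjOn.encard_image (f := f) (s := C.classOf x) hf.1.injOn
  rw [himg] at him
  rw [← him, hA]

lemma mem_seg {I : ℕ → (ℕ × ℕ) × Bool} {m : ℕ} {a : (ℕ × ℕ) × Bool} :
    a ∈ seg I m ↔ ∃ n < m, I n = a := by
  simp [seg, List.mem_map, List.mem_range]

/-- In a structure whose classes all have size 5, no 6 pairwise-related elements exist. -/
lemma no_six {C : EqStruct} (hC : ∀ x, (C.classOf x).encard = 5)
    (s : Finset ℕ) (hcard : s.card = 6)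
    (hrel : ∀ x ∈ s, ∀ y ∈ s, C.rel x y) : False := by
  have hne : s.Nonempty := by
    rw [← Finset.card_pos, hcard]; norm_num
  obtain ⟨x, hx⟩ := hne
  have hsub : (s : Set ℕ) ⊆ C.classOf x := fun y hy => hrel x hx y hy
  have h1 : (s : Set ℕ).encard ≤ (C.classOf x).encard := Set.encard_mono hsub
  rw [hC x, Set.encard_coe_eq_coe_finsetCard, hcard] at h1
  norm_num at h1

end Aux

/-- the family `{[5:ω], [6:ω]}` is InfEx-learnable up to isomorphism. -/
theorem stmt0 (Me : ℕ → EqStruct) (A B : EqStruct)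
    (hA : ∀ x, (A.classOf x).encard = 5) (hB : ∀ x, (B.classOf x).encard = 6)
    (heA : ∃ e, (Me e).Isom A) (heB : ∃ e, (Me e).Isom B) :
    ∃ M : Learner, InfExLearns Me EqStruct.Isom M A ∧ InfExLearns Me EqStruct.Isom M B := by
  classical
  obtain ⟨eA, heA⟩ := heA
  obtain ⟨eB, heB⟩ := heB
  refine ⟨mkLearner eA eB, ?_, ?_⟩
  · -- learning A : all classes size 5
    intro C hCA I hI
    refine ⟨eA, isom_trans heA (isom_symm hCA), 0, fun n _ => ?_⟩
    have hC5 : ∀ x, (C.classOf x).encard = 5 := classes_card hCA 5 hA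
    have hcond : ¬ ∃ s : Finset ℕ, s.card = 6 ∧
        ∀ x ∈ s, ∀ y ∈ s, ((x, y), true) ∈ seg I n := by
      rintro ⟨s, hcard, hmem⟩
      refine no_six hC5 s hcard (fun x hx y hy => ?_)
      obtain ⟨k, -, hk⟩ := mem_seg.mp (hmem x hx y hy)
      have := (hI.2 k).mp (by rw [hk])
      rwa [hk] at this
    simp [mkLearner, hcond]
  · -- learning B : all classes size 6
    intro C hCB I hI
    refine ⟨eB, isom_trans heB (isom_symm hCB), ?_⟩
    have hC6 : ∀ x, (C.classOf x).encard = 6 := classes_card hCB 6 hB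
    -- the class of 0 has exactly 6 elements; pick them
    have hfin : (C.classOf 0).Finite := by
      apply Set.finite_of_encard_eq_coe (k := 6)
      rw [hC6 0]; norm_num
    have hcard : hfin.toFinset.card = 6 := by
      have := hfin.encard_eq_coe_toFinset_card
      rw [hC6 0] at this
      exact_mod_cast this.symm
    set s := hfin.toFinset with hs
    have hrels : ∀ x ∈ s, ∀ y ∈ s, C.rel x y := by
      intro x hx y hy
      rw [hs, Set.Finite.mem_toFinset] at hx hy
      exact C.equiv.trans (C.equiv.symm hx) hy
    -- choose times at which each pair is listed
    set t : ℕ × ℕ → ℕ := fun p => (hI.1 p).choose with ht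
    set N := ((s ×ˢ s).sup t) + 1 with hN
    refine ⟨N, fun n hn => ?_⟩
    have hcond : ∃ u : Finset ℕ, u.card = 6 ∧
        ∀ x ∈ u, ∀ y ∈ u, ((x, y), true) ∈ seg I n := by
      refine ⟨s, hcard, fun x hx y hy => ?_⟩
      have hspec : (I (t (x, y))).1 = (x, y) := (hI.1 (x, y)).choose_spec
      have htlt : t (x, y) < n := by
        have : t (x, y) ≤ (s ×ˢ s).sup t :=
          Finset.le_sup (Finset.mk_mem_product hx hy)
        omega
      have hlab : (I (t (x, y))).2 = true := by
        rw [hI.2]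
        rw [hspec]
        exact hrels x hx y hy
      refine mem_seg.mpr ⟨t (x, y), htlt, ?_⟩
      exact Prod.ext hspec hlab
    simp [mkLearner, hcond]
end

section
/- The two-element family {[5:ω], [6:ω]} is not InfFin-learnable: there is no learner whose first non-? conjecture on every informant for every ω-presentation of either structure is a correct isomorphism-type conjecture. -/
open Set

attribute [local instance] Classical.propDecidable

namespace EqStruct

noncomputable def rep (A : EqStruct) (x : ℕ) : ℕ :=
  Nat.find (⟨x, A.equiv.refl x⟩ : ∃ y, A.rel x y)

lemma rel_rep (A : EqStruct) (x : ℕ) : A.rel x (A.rep x) :=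
  Nat.find_spec (⟨x, A.equiv.refl x⟩ : ∃ y, A.rel x y)

lemma rep_eq_of_rel (A : EqStruct) {x y : ℕ} (h : A.rel x y) : A.rep x = A.rep y := by
  apply le_antisymm
  · exact Nat.find_min' _ (A.equiv.trans h (A.rel_rep y))
  · exact Nat.find_min' _ (A.equiv.trans (A.equiv.symm h) (A.rel_rep x))

lemma rel_iff_rep_eq (A : EqStruct) (x y : ℕ) : A.rel x y ↔ A.rep x = A.rep y := by
  refine ⟨A.rep_eq_of_rel, fun h => ?_⟩
  exact A.equiv.trans (A.rel_rep x) (h ▸ A.equiv.symm (A.rel_rep y))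

lemma rep_rep (A : EqStruct) (x : ℕ) : A.rep (A.rep x) = A.rep x :=
  (A.rep_eq_of_rel (A.rel_rep x)).symm

lemma mem_classOf_rep (A : EqStruct) (x : ℕ) : x ∈ A.classOf (A.rep x) :=
  A.equiv.symm (A.rel_rep x)

lemma reps_infinite (B : EqStruct) (hfin : ∀ x, (B.classOf x).Finite) :
    {y : ℕ | B.rep y = y}.Infinite := by
  by_contra hR
  rw [Set.not_infinite] at hR
  have hcover : (Set.univ : Set ℕ) ⊆ ⋃ r ∈ {y : ℕ | B.rep y = y}, B.classOf r := by
    intro y _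
    exact Set.mem_biUnion (B.rep_rep y) (B.mem_classOf_rep y)
  exact Set.infinite_univ (Set.Finite.subset (hR.biUnion (fun r _ => hfin r)) hcover)

lemma exists_embed (A B : EqStruct)
    (hA : ∀ x, (A.classOf x).encard = 5) (hB : ∀ x, (B.classOf x).encard = 6) :
    ∃ f : ℕ → ℕ, Function.Injective f ∧ ∀ x y, (A.rel x y ↔ B.rel (f x) (f y)) := by
  have hAfin : ∀ x, (A.classOf x).Finite := fun x =>
    Set.finite_of_encard_eq_coe (k := 5) (by rw [hA]; norm_num)
  have hBfin : ∀ x, (B.classOf x).Finite := fun x =>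
    Set.finite_of_encard_eq_coe (k := 6) (by rw [hB]; norm_num)
  have hreps := B.reps_infinite hBfin
  let c := hreps.natEmbedding
  let c' : ℕ → ℕ := fun r => (c r).1
  have hc'inj : Function.Injective c' := fun a b h => c.injective (Subtype.ext h)
  have hc'rep : ∀ r, B.rep (c' r) = c' r := fun r => (c r).2
  have hg : ∀ r : ℕ, ∃ g : ℕ → ℕ, A.classOf r ⊆ g ⁻¹' (B.classOf (c' r)) ∧
      Set.InjOn g (A.classOf r) := by
    intro r
    exact (hAfin r).exists_injOn_of_encard_le (by rw [hA, hB]; norm_num)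
  choose g hgsub hginj using hg
  let f : ℕ → ℕ := fun x => g (A.rep x) x
  have hf1 : ∀ x, f x ∈ B.classOf (c' (A.rep x)) := fun x =>
    hgsub (A.rep x) (A.mem_classOf_rep x)
  have hrepf : ∀ x, B.rep (f x) = c' (A.rep x) := fun x => by
    rw [← B.rep_eq_of_rel (hf1 x), hc'rep]
  have hiff : ∀ x y, (A.rel x y ↔ B.rel (f x) (f y)) := by
    intro x y
    constructor
    · intro h
      have hr := A.rep_eq_of_rel h
      have h1 := hf1 x
      have h2 := hf1 y
      rw [hr] at h1
      exact B.equiv.trans (B.equiv.symm h1) h2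
    · intro h
      have := B.rep_eq_of_rel h
      rw [hrepf, hrepf] at this
      exact (A.rel_iff_rep_eq x y).2 (hc'inj this)
  refine ⟨f, fun x y hxy => ?_, hiff⟩
  have hrel : A.rel x y := (hiff x y).2 (hxy ▸ B.equiv.refl (f x))
  have hr := A.rep_eq_of_rel hrel
  refine hginj (A.rep x) (A.mem_classOf_rep x)
    (show y ∈ A.classOf (A.rep x) by rw [hr]; exact A.mem_classOf_rep y) ?_
  show g (A.rep x) x = g (A.rep x) y
  conv_rhs => rw [hr]
  exact hxy

lemma exists_perm {f : ℕ → ℕ} (hf : Function.Injective f) (n : ℕ) :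
    ∃ h : ℕ ≃ ℕ, ∀ x < n, h x = f x := by
  classical
  have hs : (Set.Iio n).Finite := Set.finite_Iio n
  have ht : (f '' Set.Iio n).Finite := hs.image f
  have h1 : ((Set.Iio n)ᶜ : Set ℕ).Infinite := hs.infinite_compl
  have h2 : ((f '' Set.Iio n)ᶜ : Set ℕ).Infinite := ht.infinite_compl
  haveI := h1.to_subtype
  haveI := h2.to_subtype
  obtain ⟨d1⟩ := nonempty_denumerable ↥((Set.Iio n)ᶜ : Set ℕ)
  obtain ⟨d2⟩ := nonempty_denumerable ↥((f '' Set.Iio n)ᶜ : Set ℕ)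
  let e₀ : Set.Iio n ≃ ↥(f '' Set.Iio n) := Equiv.Set.imageOfInjOn f _ hf.injOn
  let e₁ : ↥((Set.Iio n)ᶜ : Set ℕ) ≃ ↥((f '' Set.Iio n)ᶜ : Set ℕ) :=
    (Denumerable.eqv _).trans (Denumerable.eqv _).symm
  obtain ⟨e, he⟩ := (Equiv.Set.compl e₀).symm e₁
  exact ⟨e, fun x hx => he ⟨x, hx⟩⟩


lemma isom_refl (A : EqStruct) : A.Isom A :=
  ⟨id, Function.bijective_id, fun _ _ => Iff.rfl⟩

lemma isom_symm {A B : EqStruct} (h : A.Isom B) : B.Isom A := by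
  obtain ⟨f, hf, hiff⟩ := h
  let e := Equiv.ofBijective f hf
  refine ⟨e.symm, e.symm.bijective, fun x y => ?_⟩
  have hx : f (e.symm x) = x := e.apply_symm_apply x
  have hy : f (e.symm y) = y := e.apply_symm_apply y
  rw [hiff (e.symm x) (e.symm y), hx, hy]

lemma isom_trans {A B C : EqStruct} (h1 : A.Isom B) (h2 : B.Isom C) : A.Isom C := by
  obtain ⟨f, hf, hiff⟩ := h1
  obtain ⟨g, hg, hiff'⟩ := h2
  exact ⟨g ∘ f, hg.comp hf, fun x y => (hiff x y).trans (hiff' (f x) (f y))⟩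

lemma encard_classOf_of_isom {A B : EqStruct} {f : ℕ → ℕ} (hf : Function.Bijective f)
    (hiff : ∀ x y, A.rel x y ↔ B.rel (f x) (f y)) (x : ℕ) :
    (B.classOf (f x)).encard = (A.classOf x).encard := by
  have himg : f '' A.classOf x = B.classOf (f x) := by
    ext z
    constructor
    · rintro ⟨y, hy, rfl⟩; exact (hiff x y).1 hy
    · intro hz
      obtain ⟨y, rfl⟩ := hf.2 z
      exact ⟨y, (hiff x y).2 hz, rfl⟩
  rw [← himg, hf.injective.injOn.encard_image]

/-- The canonical informant of a structure. -/
noncomputable def canon (A : EqStruct) : ℕ → (ℕ × ℕ) × Bool :=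
  fun k => (Nat.unpair k, decide (A.rel (Nat.unpair k).1 (Nat.unpair k).2))

end EqStruct

lemma canon_informant (A : EqStruct) : IsInformant A A.canon := by
  constructor
  · intro p
    exact ⟨Nat.pair p.1 p.2, by simp [EqStruct.canon, Nat.unpair_pair]⟩
  · intro k
    simp [EqStruct.canon]

/-- the family `{[5:ω], [6:ω]}` is not InfFin-learnable. -/
theorem stmt1 (Me : ℕ → EqStruct) (A B : EqStruct)
    (hA : ∀ x, (A.classOf x).encard = 5) (hB : ∀ x, (B.classOf x).encard = 6) :
    ¬ ∃ M : Learner, InfFinLearns Me EqStruct.Isom M A ∧ InfFinLearns Me EqStruct.Isom M B := by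
  rintro ⟨M, hMA, hMB⟩
  -- Run M on the canonical informant for A.
  obtain ⟨e, hIsomA, ⟨n, hMn⟩, -⟩ := hMA A (EqStruct.isom_refl A) A.canon (canon_informant A)
  -- Build an embedding of A into B, and a permutation agreeing with it below n.
  obtain ⟨f, hfinj, hfiff⟩ := EqStruct.exists_embed A B hA hB
  obtain ⟨h, hh⟩ := EqStruct.exists_perm hfinj n
  -- The pullback of B along h: isomorphic to B, agrees with A below n.
  let B' : EqStruct := ⟨fun x y => B.rel (h x) (h y),
    ⟨fun x => B.equiv.refl _, fun hxy => B.equiv.symm hxy, fun h1 h2 => B.equiv.trans h1 h2⟩⟩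
  have hB'B : B'.Isom B := ⟨h, h.bijective, fun _ _ => Iff.rfl⟩
  have hagree : ∀ x < n, ∀ y < n, (B'.rel x y ↔ A.rel x y) := by
    intro x hx y hy
    show B.rel (h x) (h y) ↔ _
    rw [hh x hx, hh y hy]
    exact (hfiff x y).symm
  -- An informant for B' starting with the first n entries of A.canon.
  let J : ℕ → (ℕ × ℕ) × Bool := fun k => if k < n then A.canon k else B'.canon (k - n)
  have hJ : IsInformant B' J := by
    constructor
    · intro p
      refine ⟨n + Nat.pair p.1 p.2, ?_⟩
      have : ¬ (n + Nat.pair p.1 p.2 < n) := by omega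
      simp [J, this, EqStruct.canon, Nat.unpair_pair]
    · intro k
      by_cases hk : k < n
      · have h1 : (Nat.unpair k).1 < n := lt_of_le_of_lt (Nat.unpair_left_le k) hk
        have h2 : (Nat.unpair k).2 < n := lt_of_le_of_lt (Nat.unpair_right_le k) hk
        have := (canon_informant A).2 k
        simp only [J, if_pos hk]
        rw [this, EqStruct.canon]
        exact (hagree _ h1 _ h2).symm
      · have := (canon_informant B').2 (k - n)
        simpa [J, if_neg hk] using this
  have hsegeq : seg J n = seg A.canon n := by
    unfold seg
    refine List.map_congr_left (fun k hk => ?_)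
    have hk' : k < n := List.mem_range.mp hk
    simp [J, hk']
  obtain ⟨e2, hIsomB, -, huniqB⟩ := hMB B' hB'B J hJ
  have he2 : e = e2 := huniqB n e (by rw [hsegeq]; exact hMn)
  subst he2
  -- Now Me e ≅ A and Me e ≅ B', hence A ≅ B', contradicting class sizes 5 vs 6.
  obtain ⟨g, hg, hgiff⟩ := EqStruct.isom_trans (EqStruct.isom_symm hIsomA) hIsomB
  have hB'6 : ∀ x, (B'.classOf x).encard = 6 := by
    intro x
    have := EqStruct.encard_classOf_of_isom h.bijective (fun _ _ => Iff.rfl : ∀ x y,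
      B'.rel x y ↔ B.rel (h x) (h y)) x
    rw [hB] at this
    exact this.symm
  have := EqStruct.encard_classOf_of_isom hg hgiff 0
  rw [hB'6, hA] at this
  exact absurd this (by norm_num)
end

section
/- The family {[5:ω, 2:1], [5:ω]} (the first having infinitely many classes of size 5 plus one class of size 2, the second having infinitely many classes of size 5 only) is not InfEx-learnable up to isomorphism, but it is InfEx-learnable up to bi-embeddability (indeed by a constant learner, since the two structures are bi-embeddable). -/
open Set

namespace S2

def ofFn (c : ℕ → ℕ) : EqStruct :=
  ⟨fun x y => c x = c y, ⟨fun _ => rfl, Eq.symm, Eq.trans⟩⟩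

@[simp] lemma ofFn_rel (c : ℕ → ℕ) (x y : ℕ) : (ofFn c).rel x y ↔ c x = c y := Iff.rfl

lemma isom_refl (A : EqStruct) : A.Isom A := ⟨id, Function.bijective_id, fun _ _ => Iff.rfl⟩

lemma isom_symm {A B : EqStruct} (h : A.Isom B) : B.Isom A := by
  obtain ⟨f, hf, hrel⟩ := h
  obtain ⟨g, hgf, hfg⟩ := Function.bijective_iff_has_inverse.mp hf
  refine ⟨g, Function.bijective_iff_has_inverse.mpr ⟨f, hfg, hgf⟩, fun x y => ?_⟩
  rw [hrel (g x) (g y), hfg x, hfg y]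

lemma isom_trans {A B C : EqStruct} (h1 : A.Isom B) (h2 : B.Isom C) : A.Isom C := by
  obtain ⟨f, hf, hrf⟩ := h1; obtain ⟨g, hg, hrg⟩ := h2
  exact ⟨g ∘ f, hg.comp hf, fun x y => (hrf x y).trans (hrg (f x) (f y))⟩

lemma isom_embeds {A B : EqStruct} (h : A.Isom B) : A.Embeds B := by
  obtain ⟨f, hf, hrel⟩ := h; exact ⟨f, hf.injective, hrel⟩

lemma embeds_trans {A B C : EqStruct} (h1 : A.Embeds B) (h2 : B.Embeds C) : A.Embeds C := by
  obtain ⟨f, hf, hrf⟩ := h1; obtain ⟨g, hg, hrg⟩ := h2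
  exact ⟨g ∘ f, hg.comp hf, fun x y => (hrf x y).trans (hrg (f x) (f y))⟩

lemma isom_class_encard {A B : EqStruct} (f : ℕ → ℕ) (hf : Function.Bijective f)
    (hrel : ∀ x y, A.rel x y ↔ B.rel (f x) (f y)) (x : ℕ) :
    (B.classOf (f x)).encard = (A.classOf x).encard := by
  have himg : B.classOf (f x) = f '' (A.classOf x) := by
    ext y
    constructor
    · intro hy
      obtain ⟨z, hz⟩ := hf.surjective y
      exact ⟨z, (hrel x z).mpr (hz ▸ hy), hz⟩
    · rintro ⟨z, hz, rfl⟩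
      exact (hrel x z).mp hz
  rw [himg, Set.InjOn.encard_image (hf.injective.injOn)]

/-- the gluing lemma: matching finite fiber sizes give isomorphism -/
lemma glue {c d : ℕ → ℕ}
    (h : ∀ i, ∃ n : ℕ, (c ⁻¹' {i}).encard = n ∧ (d ⁻¹' {i}).encard = n) :
    (ofFn c).Isom (ofFn d) := by
  have key : ∀ i, ∃ g : ℕ → ℕ, Set.BijOn g (c ⁻¹' {i}) (d ⁻¹' {i}) := by
    intro i
    obtain ⟨n, h1, h2⟩ := h i
    have f1 : (c ⁻¹' {i}).Finite := Set.finite_of_encard_eq_coe h1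
    have f2 : (d ⁻¹' {i}).Finite := Set.finite_of_encard_eq_coe h2
    haveI := f1.to_subtype; haveI := f2.to_subtype
    have hcard : Nat.card ↥(c ⁻¹' {i}) = Nat.card ↥(d ⁻¹' {i}) := by
      rw [Nat.card_coe_set_eq, Nat.card_coe_set_eq, Set.ncard_def, Set.ncard_def, h1, h2]
    obtain ⟨e⟩ := Finite.card_eq.mp hcard
    classical
    refine ⟨fun x => if hx : c x = i then (e ⟨x, hx⟩ : ℕ) else 0, ?_, ?_, ?_⟩
    · intro x hx
      simp only [Set.mem_preimage, Set.mem_singleton_iff] at hx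
      simp only [hx, dif_pos]
      exact (e ⟨x, hx⟩).2
    · intro x hx y hy hxy
      simp only [Set.mem_preimage, Set.mem_singleton_iff] at hx hy
      simp only [hx, hy, dif_pos] at hxy
      have := e.injective (Subtype.ext hxy)
      exact congrArg Subtype.val this
    · intro y hy
      simp only [Set.mem_preimage, Set.mem_singleton_iff] at hy
      refine ⟨(e.symm ⟨y, hy⟩ : ℕ), (e.symm ⟨y, hy⟩).2, ?_⟩
      have hx : c ((e.symm ⟨y, hy⟩ : ℕ)) = i := (e.symm ⟨y, hy⟩).2
      simp only [hx, dif_pos]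
      have : e ⟨(e.symm ⟨y, hy⟩ : ℕ), hx⟩ = ⟨y, hy⟩ := by
        rw [show (⟨(e.symm ⟨y, hy⟩ : ℕ), hx⟩ : ↥(c ⁻¹' {i})) = e.symm ⟨y, hy⟩ from Subtype.ext rfl]
        exact e.apply_symm_apply _
      rw [this]
  choose g hg using key
  have hmap : ∀ x, d (g (c x) x) = c x := fun x => (hg (c x)).mapsTo rfl
  refine ⟨fun x => g (c x) x, ⟨?_, ?_⟩, ?_⟩
  · intro x y hxy
    have hxy' : g (c x) x = g (c y) y := hxy
    have hcx : c x = c y := by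
      have h1 := hmap x; rw [hxy', hmap y] at h1; exact h1.symm
    rw [hcx] at hxy'
    exact (hg (c y)).injOn (show x ∈ c ⁻¹' {c y} from hcx) rfl hxy'
  · intro z
    obtain ⟨x, hx, hgx⟩ := (hg (d z)).surjOn (show z ∈ d ⁻¹' {d z} from rfl)
    simp only [Set.mem_preimage, Set.mem_singleton_iff] at hx
    refine ⟨x, ?_⟩
    show g (c x) x = z
    rw [hx, hgx]
  · intro x y
    simp only [ofFn_rel]
    constructor
    · intro hxy; rw [hmap, hmap, hxy]
    · intro hxy; rw [← hmap x, ← hmap y, hxy]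

end S2


namespace S2

lemma enc_Ico (a n : ℕ) : (Set.Ico a (a+n)).encard = n := by
  rw [show Set.Ico a (a+n) = ↑(Finset.Ico a (a+n)) by simp]
  rw [Set.encard_coe_eq_coe_finsetCard]; simp

/-- canonical copy of A : all classes of size 5 -/
def c0 : ℕ → ℕ := fun x => x / 5
/-- canonical copy of B : one class {0,1} of size 2, rest of size 5 -/
def b0 : ℕ → ℕ := fun x => if x < 2 then 0 else (x - 2) / 5 + 1

lemma c0_fiber (i : ℕ) : c0 ⁻¹' {i} = Set.Ico (5*i) (5*i+5) := by
  ext x; simp only [c0, Set.mem_preimage, Set.mem_singleton_iff, Set.mem_Ico]; omega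

lemma c0_fiber_encard (i : ℕ) : (c0 ⁻¹' {i}).encard = 5 := by
  rw [c0_fiber]; exact enc_Ico (5*i) 5

lemma b0_fiber_zero : b0 ⁻¹' {0} = Set.Ico 0 2 := by
  ext x; simp only [b0, Set.mem_preimage, Set.mem_singleton_iff, Set.mem_Ico]
  split <;> omega

lemma b0_fiber_succ (i : ℕ) : b0 ⁻¹' {i+1} = Set.Ico (5*i+2) (5*i+2+5) := by
  ext x; simp only [b0, Set.mem_preimage, Set.mem_singleton_iff, Set.mem_Ico]
  split <;> omega

lemma b0_fiber_encard (i : ℕ) : (b0 ⁻¹' {i}).encard = if i = 0 then 2 else 5 := by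
  cases i with
  | zero => simpa [b0_fiber_zero] using enc_Ico 0 2
  | succ k => simp only [Nat.succ_ne_zero, if_false]; rw [b0_fiber_succ]; exact enc_Ico _ 5

section Norm

variable (A : EqStruct)

/-- minimum of the class of x -/
noncomputable def minf (x : ℕ) : ℕ := sInf (A.classOf x)

lemma classOf_self (x : ℕ) : x ∈ A.classOf x := A.equiv.refl x

lemma classOf_eq {x y : ℕ} (h : A.rel x y) : A.classOf x = A.classOf y := by
  ext z; exact ⟨fun hz => A.equiv.trans (A.equiv.symm h) hz, fun hz => A.equiv.trans h hz⟩

lemma minf_mem (x : ℕ) : minf A x ∈ A.classOf x := Nat.sInf_mem ⟨x, classOf_self A x⟩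

lemma rel_iff_minf_eq (x y : ℕ) : A.rel x y ↔ minf A x = minf A y := by
  constructor
  · intro h; unfold minf; rw [classOf_eq A h]
  · intro h
    have h1 : A.rel x (minf A x) := minf_mem A x
    have h2 : A.rel y (minf A y) := minf_mem A y
    rw [h] at h1
    exact A.equiv.trans h1 (A.equiv.symm h2)

/-- x is the minimum of its own class -/
def ClsMin (m : ℕ) : Prop := minf A m = m

lemma minf_clsMin (x : ℕ) : ClsMin A (minf A x) := by
  unfold ClsMin minf
  rw [show A.classOf (sInf (A.classOf x)) = A.classOf x from (classOf_eq A (minf_mem A x)).symm]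

lemma fiber_of_clsMin {m : ℕ} (hm : ClsMin A m) : (minf A) ⁻¹' {m} = A.classOf m := by
  ext x
  simp only [Set.mem_preimage, Set.mem_singleton_iff]
  show minf A x = m ↔ A.rel m x
  rw [rel_iff_minf_eq A m x, hm]
  exact eq_comm

lemma fiber_of_not_clsMin {m : ℕ} (hm : ¬ ClsMin A m) : (minf A) ⁻¹' {m} = ∅ := by
  ext x
  simp only [Set.mem_preimage, Set.mem_singleton_iff, Set.mem_empty_iff_false, iff_false]
  intro h
  exact hm (h ▸ minf_clsMin A x)

lemma clsMin_infinite (hfin : ∀ x, (A.classOf x).Finite) : {m | ClsMin A m}.Infinite := by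
  intro hf
  have hsub : (Set.univ : Set ℕ) ⊆ ⋃ m ∈ {m | ClsMin A m}, A.classOf m := by
    intro x _
    refine Set.mem_biUnion (minf_clsMin A x) ?_
    exact minf_mem A x |> fun h => (classOf_eq A h) ▸ classOf_self A x
  exact Set.infinite_univ (α := ℕ) (Set.Finite.subset (Set.Finite.biUnion hf (fun m _ => hfin m)) hsub)

end Norm

end S2


namespace S2

open Classical in
noncomputable def nthMin (P : Set ℕ) : ℕ → ℕ := Nat.nth (· ∈ P)

lemma isom_ofFn_minf (A : EqStruct) : A.Isom (ofFn (minf A)) :=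
  ⟨id, Function.bijective_id, fun x y => rel_iff_minf_eq A x y⟩

section NA
variable (A : EqStruct)

lemma normA (hA : ∀ x, (A.classOf x).encard = 5) : A.Isom (ofFn c0) := by
  have hfin : ∀ x, (A.classOf x).Finite := fun x => Set.finite_of_encard_eq_coe (hA x)
  have hinf : {m | ClsMin A m}.Infinite := clsMin_infinite A hfin
  set P : ℕ → Prop := fun m => ClsMin A m with hP
  have hinf' : (setOf P).Infinite := hinf
  -- intermediate function dA
  set dA : ℕ → ℕ := fun x => Nat.nth P (x / 5) with hdA
  have hnth_mem : ∀ k, ClsMin A (Nat.nth P k) := fun k => Nat.nth_mem_of_infinite hinf' k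
  have hnth_inj : Function.Injective (Nat.nth P) := Nat.nth_injective hinf'
  have h1 : (ofFn (minf A)).Isom (ofFn dA) := by
    apply glue
    intro i
    by_cases hi : ClsMin A i
    · refine ⟨5, ?_, ?_⟩
      · rw [fiber_of_clsMin A hi]
        have := minf_mem A i
        exact hA i
      · classical
        obtain ⟨k, hk⟩ : ∃ k, Nat.nth P k = i := ⟨Nat.count P i, Nat.nth_count hi⟩
        have : dA ⁻¹' {i} = Set.Ico (5*k) (5*k+5) := by
          ext x
          simp only [hdA, Set.mem_preimage, Set.mem_singleton_iff, Set.mem_Ico]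
          constructor
          · intro hx; have := hnth_inj (hk ▸ hx : Nat.nth P (x/5) = Nat.nth P k); omega
          · intro hx; rw [show x / 5 = k by omega, hk]
        rw [this]; exact enc_Ico (5*k) 5
    · refine ⟨0, ?_, ?_⟩
      · rw [fiber_of_not_clsMin A hi]; simp
      · have : dA ⁻¹' {i} = ∅ := by
          ext x
          simp only [hdA, Set.mem_preimage, Set.mem_singleton_iff, Set.mem_empty_iff_false,
            iff_false]
          intro hx; exact hi (hx ▸ hnth_mem (x/5))
        rw [this]; simp
  have h2 : (ofFn dA).Isom (ofFn c0) := by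
    refine ⟨id, Function.bijective_id, fun x y => ?_⟩
    simp only [ofFn_rel, id]
    exact ⟨fun h => by simpa [c0] using hnth_inj h, fun h => by simp only [hdA]; rw [show x/5 = y/5 from h]⟩
  exact isom_trans (isom_ofFn_minf A) (isom_trans h1 h2)

end NA

section NB
variable (B : EqStruct)

lemma normB (hB : ∃ a, (B.classOf a).encard = 2 ∧ ∀ x, ¬ B.rel x a → (B.classOf x).encard = 5) :
    B.Isom (ofFn b0) := by
  obtain ⟨a, ha2, ha5⟩ := hB
  have hfin : ∀ x, (B.classOf x).Finite := by
    intro x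
    by_cases h : B.rel x a
    · rw [classOf_eq B h]
      rw [show B.classOf a = B.classOf a from rfl] at ha2
      have : B.classOf a = B.classOf a := rfl
      exact Set.finite_of_encard_eq_coe (by
        rw [show (B.classOf a).encard = 2 from ha2]; rfl)
    · exact Set.finite_of_encard_eq_coe (ha5 x h)
  set m : ℕ := minf B a with hm
  have hmMin : ClsMin B m := minf_clsMin B a
  have hclsm : B.classOf m = B.classOf a := (classOf_eq B (minf_mem B a)).symm
  have hinfM : {x | ClsMin B x}.Infinite := clsMin_infinite B hfin
  set P : ℕ → Prop := fun x => ClsMin B x ∧ x ≠ m with hP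
  have hinf' : (setOf P).Infinite := by
    have : setOf P = {x | ClsMin B x} \ {m} := by
      ext x; simp [hP, Set.mem_diff]; exact Iff.rfl
    rw [this]
    exact Set.Infinite.diff hinfM (Set.finite_singleton m)
  have hnth_mem : ∀ k, P (Nat.nth P k) := fun k => Nat.nth_mem_of_infinite hinf' k
  have hnth_inj : Function.Injective (Nat.nth P) := Nat.nth_injective hinf'
  set dB : ℕ → ℕ := fun x => if x < 2 then m else Nat.nth P ((x - 2) / 5) with hdB
  have h1 : (ofFn (minf B)).Isom (ofFn dB) := by
    apply glue
    intro i
    by_cases him : i = m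
    · refine ⟨2, ?_, ?_⟩
      · rw [him, fiber_of_clsMin B hmMin, hclsm]; exact ha2
      · have hset : dB ⁻¹' {i} = Set.Ico 0 2 := by
          ext x
          simp only [hdB, Set.mem_preimage, Set.mem_singleton_iff, Set.mem_Ico]
          split
          · next hx => rw [him]; simp; omega
          · next hx =>
              constructor
              · intro h; exact absurd (h.trans him) (hnth_mem ((x-2)/5)).2
              · intro h; omega
        rw [hset]; exact enc_Ico 0 2
    · by_cases hi : P i
      · refine ⟨5, ?_, ?_⟩
        · rw [fiber_of_clsMin B hi.1]
          apply ha5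
          intro hrel
          have hcls : B.classOf i = B.classOf a := classOf_eq B hrel
          have hmi : minf B i = m := by
            unfold minf; rw [hcls]; exact hm.symm
          have h1 : minf B i = i := hi.1
          exact hi.2 (h1.symm.trans hmi)
        · classical
          obtain ⟨k, hk⟩ : ∃ k, Nat.nth P k = i := ⟨Nat.count P i, Nat.nth_count hi⟩
          have : dB ⁻¹' {i} = Set.Ico (5*k+2) (5*k+2+5) := by
            ext x
            simp only [hdB, Set.mem_preimage, Set.mem_singleton_iff, Set.mem_Ico]
            split
            · constructor
              · intro hx; exact absurd hx.symm him
              · omega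
            · constructor
              · intro hx
                have := hnth_inj (hk ▸ hx : Nat.nth P ((x-2)/5) = Nat.nth P k)
                omega
              · intro hx; rw [show (x-2) / 5 = k by omega, hk]
          rw [this]; exact enc_Ico (5*k+2) 5
      · refine ⟨0, ?_, ?_⟩
        · have : ¬ ClsMin B i := by
            intro hc; exact hi ⟨hc, him⟩
          rw [fiber_of_not_clsMin B this]; simp
        · have : dB ⁻¹' {i} = ∅ := by
            ext x
            simp only [hdB, Set.mem_preimage, Set.mem_singleton_iff, Set.mem_empty_iff_false,
              iff_false]
            split
            · intro hx; exact him (hx.symm)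
            · intro hx; exact hi (hx ▸ hnth_mem ((x-2)/5))
          rw [this]; simp
  have h2 : (ofFn dB).Isom (ofFn b0) := by
    refine ⟨id, Function.bijective_id, fun x y => ?_⟩
    simp only [ofFn_rel, id]
    have hne : ∀ k, Nat.nth P k ≠ m := fun k => (hnth_mem k).2
    rcases lt_or_ge x 2 with hx | hx <;> rcases lt_or_ge y 2 with hy | hy
    · simp [hdB, b0, hx, hy, show x ≤ 1 by omega, show y ≤ 1 by omega]
    · simp only [hdB, b0, if_pos hx, if_neg (by omega : ¬ y < 2)]
      constructor
      · intro h; exact absurd h.symm (hne _)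
      · omega
    · simp only [hdB, b0, if_pos hy, if_neg (by omega : ¬ x < 2)]
      constructor
      · intro h; exact absurd h (hne _)
      · omega
    · simp only [hdB, b0, if_neg (by omega : ¬ x < 2), if_neg (by omega : ¬ y < 2)]
      constructor
      · intro h; have := hnth_inj h; omega
      · intro h; rw [show (x-2)/5 = (y-2)/5 by omega]
  exact isom_trans (isom_ofFn_minf B) (isom_trans h1 h2)

end NB

end S2


namespace S2

lemma isom_not_AB {A B : EqStruct} (hA : ∀ x, (A.classOf x).encard = 5)
    (hB : ∃ a, (B.classOf a).encard = 2 ∧ ∀ x, ¬ B.rel x a → (B.classOf x).encard = 5)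
    (h : A.Isom B) : False := by
  obtain ⟨f, hf, hrel⟩ := h
  obtain ⟨a, ha2, -⟩ := hB
  obtain ⟨b, hb⟩ := hf.surjective a
  have h1 : (B.classOf (f b)).encard = (A.classOf b).encard := isom_class_encard f hf hrel b
  rw [hb, ha2, hA b] at h1
  norm_num at h1

lemma emb_c0_b0 : (ofFn c0).Embeds (ofFn b0) := by
  refine ⟨fun x => x + 2, fun x y h => Nat.add_right_cancel h, fun x y => ?_⟩
  simp only [ofFn_rel, c0, b0, if_neg (by omega : ¬ x + 2 < 2), if_neg (by omega : ¬ y + 2 < 2)]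
  constructor <;> intro h <;> omega

lemma emb_b0_c0 : (ofFn b0).Embeds (ofFn c0) := by
  refine ⟨fun x => if x < 2 then x else x + 3, fun x y h => by simp only at h; split at h <;> split at h <;> omega, fun x y => ?_⟩
  simp only [ofFn_rel, c0, b0]
  split <;> split <;> constructor <;> intro h <;> omega

/-- pair enumeration -/
def pr : ℕ → ℕ × ℕ := fun n => Denumerable.ofNat (ℕ × ℕ) n

lemma pr_surj (p : ℕ × ℕ) : ∃ n, pr n = p := ⟨Encodable.encode p, Denumerable.ofNat_encode p⟩

open Classical in
/-- canonical informant -/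
noncomputable def infor (C : EqStruct) : ℕ → (ℕ × ℕ) × Bool :=
  fun n => (pr n, if C.rel (pr n).1 (pr n).2 then true else false)

lemma infor_informant (C : EqStruct) : IsInformant C (infor C) := by
  constructor
  · intro p; obtain ⟨n, hn⟩ := pr_surj p; exact ⟨n, hn⟩
  · intro n
    simp only [infor]
    split <;> simp_all

/-- a bound on the numbers mentioned in the first N pairs -/
def pbK (N : ℕ) : ℕ := (Finset.range N).sup (fun m => max (pr m).1 (pr m).2) + 1

lemma pbK_lt {m N : ℕ} (h : m < N) : (pr m).1 < pbK N ∧ (pr m).2 < pbK N := by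
  have hle := Finset.le_sup (f := fun m => max (pr m).1 (pr m).2) (Finset.mem_range.mpr h)
  have h1 := le_max_left (pr m).1 (pr m).2
  have h2 := le_max_right (pr m).1 (pr m).2
  unfold pbK
  omega

lemma seg_ext {c d : ℕ → ℕ} {n : ℕ} (h : ∀ x < pbK n, c x = d x) :
    seg (infor (ofFn c)) n = seg (infor (ofFn d)) n := by
  apply List.map_congr_left
  intro m hm
  have hmn : m < n := List.mem_range.mp hm
  obtain ⟨h1, h2⟩ := pbK_lt hmn
  simp only [infor]
  congr 1
  have e1 : c (pr m).1 = d (pr m).1 := h _ h1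
  have e2 : c (pr m).2 = d (pr m).2 := h _ h2
  simp only [ofFn_rel, e1, e2]

end S2


namespace S2

structure AState where
  c : ℕ → ℕ
  K : ℕ
  L : ℕ
  hlow : ∀ x, x < K → c x < L
  htail : ∀ x, K ≤ x → c x = L + (x - K)/5
  hfib : ∀ i, i < L → (c ⁻¹' {i}).encard = 5 ∧ (c ⁻¹' {i}) ⊆ Set.Iio K

structure BState where
  c : ℕ → ℕ
  K : ℕ
  L : ℕ
  hlow : ∀ x, x < K → c x < L
  h2 : c ⁻¹' {L} = {K, K+1}
  htail : ∀ x, K + 2 ≤ x → c x = (L+1) + (x - (K+2))/5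
  hfib : ∀ i, i < L → (c ⁻¹' {i}).encard = 5 ∧ (c ⁻¹' {i}) ⊆ Set.Iio K

def initA : AState where
  c := fun x => x / 5
  K := 0
  L := 0
  hlow := by intro x hx; exact absurd hx (by omega)
  htail := by intro x _; show x / 5 = 0 + (x - 0)/5; omega
  hfib := by intro i hi; exact absurd hi (by omega)

lemma AState.fib_all (S : AState) (i : ℕ) : (S.c ⁻¹' {i}).encard = 5 := by
  rcases lt_or_ge i S.L with hi | hi
  · exact (S.hfib i hi).1
  · have hset : S.c ⁻¹' {i} = Set.Ico (S.K + 5*(i - S.L)) (S.K + 5*(i - S.L) + 5) := by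
      ext x
      simp only [Set.mem_preimage, Set.mem_singleton_iff, Set.mem_Ico]
      rcases lt_or_ge x S.K with hx | hx
      · have := S.hlow x hx; constructor
        · intro h; omega
        · intro h; omega
      · rw [S.htail x hx]; omega
    rw [hset]
    have := enc_Ico (S.K + 5*(i - S.L)) 5
    convert this using 2; norm_num

lemma AState.isomA (S : AState) : (ofFn S.c).Isom (ofFn c0) := by
  apply glue
  intro i
  exact ⟨5, S.fib_all i, c0_fiber_encard i⟩

lemma BState.cK (S : BState) : S.c S.K = S.L := by
  have : S.K ∈ S.c ⁻¹' {S.L} := by rw [S.h2]; simp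
  simpa using this

lemma BState.cK1 (S : BState) : S.c (S.K + 1) = S.L := by
  have : S.K + 1 ∈ S.c ⁻¹' {S.L} := by rw [S.h2]; simp
  simpa using this

lemma BState.c_eq_L_iff (S : BState) (x : ℕ) : S.c x = S.L ↔ x = S.K ∨ x = S.K + 1 := by
  have : (x ∈ S.c ⁻¹' {S.L}) ↔ (x ∈ ({S.K, S.K+1} : Set ℕ)) := by rw [S.h2]
  simpa using this

lemma encard_pair {a b : ℕ} (h : a ≠ b) : ({a, b} : Set ℕ).encard = 2 := by
  rw [Set.encard_insert_of_notMem (by simpa using h), Set.encard_singleton]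
  decide

lemma BState.fib_all (S : BState) (i : ℕ) :
    (S.c ⁻¹' {i}).encard = if i = S.L then 2 else 5 := by
  rcases eq_or_ne i S.L with rfl | hne
  · rw [if_pos rfl, S.h2]; exact encard_pair (by omega)
  · rw [if_neg hne]
    rcases lt_or_ge i S.L with hi | hi
    · exact (S.hfib i hi).1
    · have hi' : S.L < i := lt_of_le_of_ne hi (Ne.symm hne)
      have hset : S.c ⁻¹' {i} =
          Set.Ico (S.K + 2 + 5*(i - S.L - 1)) (S.K + 2 + 5*(i - S.L - 1) + 5) := by
        ext x
        simp only [Set.mem_preimage, Set.mem_singleton_iff, Set.mem_Ico]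
        rcases lt_or_ge x S.K with hx | hx
        · have := S.hlow x hx; constructor
          · intro h; omega
          · intro h; omega
        · rcases lt_or_ge x (S.K + 2) with hx2 | hx2
          · have hxL : S.c x = S.L := (S.c_eq_L_iff x).mpr (by omega)
            constructor
            · intro h; omega
            · intro h; omega
          · rw [S.htail x hx2]; omega
      rw [hset]
      exact enc_Ico _ 5

lemma BState.isomB (S : BState) : (ofFn S.c).Isom (ofFn b0) := by
  have step1 : (ofFn S.c).Isom (ofFn (fun x => Equiv.swap 0 S.L (S.c x))) := by
    refine ⟨id, Function.bijective_id, fun x y => ?_⟩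
    simp only [ofFn_rel, id]
    exact ⟨fun h => by rw [h], fun h => (Equiv.swap 0 S.L).injective h⟩
  refine isom_trans step1 (glue ?_)
  intro i
  have hfib : ((fun x => Equiv.swap 0 S.L (S.c x)) ⁻¹' {i}) = S.c ⁻¹' {Equiv.swap 0 S.L i} := by
    ext x
    simp only [Set.mem_preimage, Set.mem_singleton_iff]
    constructor
    · intro h; rw [← h, Equiv.swap_apply_self]
    · intro h; rw [h, Equiv.swap_apply_self]
  rw [hfib]
  rcases eq_or_ne i 0 with rfl | h0
  · refine ⟨2, ?_, ?_⟩
    · rw [Equiv.swap_apply_left]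
      have := S.fib_all S.L
      rwa [if_pos rfl] at this
    · rw [b0_fiber_encard]; simp
  · refine ⟨5, ?_, ?_⟩
    · rcases eq_or_ne i S.L with rfl | hL
      · rw [Equiv.swap_apply_right]
        have := S.fib_all 0
        rwa [if_neg (Ne.symm h0)] at this
      · rw [Equiv.swap_apply_of_ne_of_ne h0 hL]
        have := S.fib_all i
        rwa [if_neg hL] at this
    · rw [b0_fiber_encard, if_neg h0]; decide

/-- surgery: split off a 2-class at the frontier -/
def surgB (S : AState) : BState where
  c := fun x => if x < S.K then S.c x else if x < S.K + 2 then S.L else (S.L+1) + (x - (S.K+2))/5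
  K := S.K
  L := S.L
  hlow := by
    intro x hx
    beta_reduce
    rw [if_pos hx]
    exact S.hlow x hx
  h2 := by
    ext x
    simp only [Set.mem_preimage, Set.mem_singleton_iff, Set.mem_insert_iff]
    beta_reduce
    rcases lt_or_ge x S.K with hx | hx
    · rw [if_pos hx]; have := S.hlow x hx; omega
    · rw [if_neg (by omega)]
      rcases lt_or_ge x (S.K + 2) with hx2 | hx2
      · rw [if_pos hx2]; omega
      · rw [if_neg (by omega)]; omega
  htail := by
    intro x hx
    beta_reduce
    rw [if_neg (by omega), if_neg (by omega)]
  hfib := by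
    intro i hi
    have hset : (fun x => if x < S.K then S.c x else if x < S.K + 2 then S.L
        else (S.L+1) + (x - (S.K+2))/5) ⁻¹' {i} = S.c ⁻¹' {i} := by
      ext x
      simp only [Set.mem_preimage, Set.mem_singleton_iff]
      split
      · exact Iff.rfl
      · next hx =>
        split
        · constructor
          · intro h; omega
          · intro h
            have := (S.hfib i hi).2 (show x ∈ S.c ⁻¹' {i} from h)
            simp only [Set.mem_Iio] at this; omega
        · constructor
          · intro h; omega
          · intro h
            have := (S.hfib i hi).2 (show x ∈ S.c ⁻¹' {i} from h)
            simp only [Set.mem_Iio] at this; omega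
    rw [hset]
    exact S.hfib i hi

/-- surgery: complete the 2-class to size 5, cutting at `S.K + 2 + 5*m` -/
def surgA (S : BState) (m : ℕ) : AState where
  c := fun x => if x < S.K + 2 + 5*m then S.c x
       else if x < S.K + 2 + 5*m + 3 then S.L
       else (S.L + 1 + m) + (x - (S.K + 2 + 5*m + 3))/5
  K := S.K + 2 + 5*m + 3
  L := S.L + 1 + m
  hlow := by
    intro x hx
    beta_reduce
    rcases lt_or_ge x (S.K + 2 + 5*m) with hC | hC
    · rw [if_pos hC]
      rcases lt_or_ge x S.K with h1 | h1
      · have := S.hlow x h1; omega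
      · rcases lt_or_ge x (S.K + 2) with h2 | h2
        · have := (S.c_eq_L_iff x).mpr (by omega); omega
        · rw [S.htail x h2]; omega
    · rw [if_neg (by omega), if_pos (by omega)]; omega
  htail := by
    intro x hx
    beta_reduce
    rw [if_neg (by omega), if_neg (by omega)]
  hfib := by
    intro i hi
    rcases lt_or_ge i S.L with hiL | hiL
    · -- old small fiber, unchanged
      have hset : (fun x => if x < S.K + 2 + 5*m then S.c x
          else if x < S.K + 2 + 5*m + 3 then S.L
          else (S.L + 1 + m) + (x - (S.K + 2 + 5*m + 3))/5) ⁻¹' {i} = S.c ⁻¹' {i} := by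
        ext x
        simp only [Set.mem_preimage, Set.mem_singleton_iff]
        split
        · exact Iff.rfl
        · next hx =>
          split
          · constructor
            · intro h; omega
            · intro h
              have := (S.hfib i hiL).2 (show x ∈ S.c ⁻¹' {i} from h)
              simp only [Set.mem_Iio] at this; omega
          · constructor
            · intro h; omega
            · intro h
              have := (S.hfib i hiL).2 (show x ∈ S.c ⁻¹' {i} from h)
              simp only [Set.mem_Iio] at this; omega
      rw [hset]
      refine ⟨(S.hfib i hiL).1, ?_⟩
      intro x hx
      have := (S.hfib i hiL).2 hx
      simp only [Set.mem_Iio] at this ⊢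
      omega
    · rcases eq_or_ne i S.L with rfl | hneL
      · -- the completed class {K, K+1, C, C+1, C+2}
        have hset : (fun x => if x < S.K + 2 + 5*m then S.c x
            else if x < S.K + 2 + 5*m + 3 then S.L
            else (S.L + 1 + m) + (x - (S.K + 2 + 5*m + 3))/5) ⁻¹' {S.L} =
            {S.K, S.K+1, S.K + 2 + 5*m, S.K + 2 + 5*m + 1, S.K + 2 + 5*m + 2} := by
          ext x
          simp only [Set.mem_preimage, Set.mem_singleton_iff, Set.mem_insert_iff]
          have hcl := S.c_eq_L_iff x
          rcases lt_or_ge x (S.K + 2 + 5*m) with hx | hx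
          · rw [if_pos hx]
            rcases lt_or_ge x (S.K + 2) with h2 | h2
            · omega
            · rw [S.htail x h2]; omega
          · rw [if_neg (by omega)]
            rcases lt_or_ge x (S.K + 2 + 5*m + 3) with h3 | h3
            · rw [if_pos h3]; omega
            · rw [if_neg (by omega)]; omega
        rw [hset]
        constructor
        · rw [Set.encard_insert_of_notMem (by simp only [Set.mem_insert_iff, Set.mem_singleton_iff]; omega),
            Set.encard_insert_of_notMem (by simp only [Set.mem_insert_iff, Set.mem_singleton_iff]; omega),
            Set.encard_insert_of_notMem (by simp only [Set.mem_insert_iff, Set.mem_singleton_iff]; omega),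
            Set.encard_insert_of_notMem (by simp only [Set.mem_insert_iff, Set.mem_singleton_iff]; omega),
            Set.encard_singleton]
          decide
        · intro x hx
          simp only [Set.mem_insert_iff, Set.mem_singleton_iff] at hx
          simp only [Set.mem_Iio]
          omega
      · -- a tail block of S that is now frozen: S.L < i < S.L + 1 + m
        have hiL' : S.L < i := lt_of_le_of_ne hiL (Ne.symm hneL)
        have hset : (fun x => if x < S.K + 2 + 5*m then S.c x
            else if x < S.K + 2 + 5*m + 3 then S.L
            else (S.L + 1 + m) + (x - (S.K + 2 + 5*m + 3))/5) ⁻¹' {i} =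
            Set.Ico (S.K + 2 + 5*(i - S.L - 1)) (S.K + 2 + 5*(i - S.L - 1) + 5) := by
          ext x
          simp only [Set.mem_preimage, Set.mem_singleton_iff, Set.mem_Ico]
          split
          · next hx =>
            rcases lt_or_ge x S.K with h1 | h1
            · have := S.hlow x h1
              constructor
              · intro h; omega
              · intro h; omega
            · rcases lt_or_ge x (S.K + 2) with h2 | h2
              · have := (S.c_eq_L_iff x).mpr (by omega)
                constructor
                · intro h; omega
                · intro h; omega
              · rw [S.htail x h2]
                omega
          · next hx =>
            split
            · constructor
              · intro h; omega
              · intro h; omega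
            · constructor
              · intro h; omega
              · intro h; omega
        rw [hset]
        constructor
        · exact enc_Ico _ 5
        · intro x hx
          simp only [Set.mem_Ico] at hx
          simp only [Set.mem_Iio]
          omega

end S2


namespace S2

lemma diag (Me : ℕ → EqStruct) (M : Learner) (A B : EqStruct)
    (hA : ∀ x, (A.classOf x).encard = 5)
    (hB : ∃ a, (B.classOf a).encard = 2 ∧ ∀ x, ¬ B.rel x a → (B.classOf x).encard = 5)
    (hMA : InfExLearns Me EqStruct.Isom M A)
    (hMB : InfExLearns Me EqStruct.Isom M B) : False := by
  have hAc : A.Isom (ofFn c0) := normA A hA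
  have hBc : B.Isom (ofFn b0) := normB B hB
  -- the one-stage step
  have STEP : ∀ (j : ℕ) (S : AState), ∃ S' : AState,
      (∀ x, x < S.K → S'.c x = S.c x) ∧ S.K < S'.K ∧ S.L < S'.L ∧
      (∀ x, S.K ≤ x → S.L ≤ S'.c x) ∧
      ∃ e n, j ≤ n ∧ (Me e).Isom B ∧ pbK n ≤ S'.K ∧
        M (seg (infor (ofFn S'.c)) n) = some e := by
    intro j S
    set D := surgB S with hD
    have hDK : D.K = S.K := rfl
    have hDL : D.L = S.L := rfl
    have hDc : ∀ x, x < S.K → D.c x = S.c x := by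
      intro x hx
      show (if x < S.K then S.c x else _) = S.c x
      rw [if_pos hx]
    have hDcK : ∀ x, S.K ≤ x → x < S.K + 2 → D.c x = S.L := by
      intro x h1 h2
      show (if x < S.K then S.c x else if x < S.K + 2 then S.L else _) = S.L
      rw [if_neg (by omega), if_pos h2]
    have hDct : ∀ x, S.K + 2 ≤ x → D.c x = (S.L+1) + (x - (S.K+2))/5 := by
      intro x h1
      show (if x < S.K then S.c x else if x < S.K + 2 then S.L else (S.L+1) + (x - (S.K+2))/5) = _
      rw [if_neg (by omega), if_neg (by omega)]
    have hDi : (ofFn D.c).Isom B := isom_trans D.isomB (isom_symm hBc)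
    obtain ⟨e, he, N, hN⟩ := hMB (ofFn D.c) hDi (infor (ofFn D.c)) (infor_informant _)
    set n := max N j with hn
    set m := pbK n with hm
    set S' := surgA D m with hS'
    have hS'K : S'.K = S.K + 2 + 5*m + 3 := rfl
    have hS'L : S'.L = S.L + 1 + m := rfl
    have hS'c : ∀ x, x < S.K + 2 + 5*m → S'.c x = D.c x := by
      intro x hx
      show (if x < D.K + 2 + 5*m then D.c x else _) = D.c x
      rw [if_pos (by rw [hDK]; omega)]
    have hS'cM : ∀ x, S.K + 2 + 5*m ≤ x → x < S.K + 2 + 5*m + 3 → S'.c x = S.L := by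
      intro x h1 h2
      show (if x < D.K + 2 + 5*m then D.c x else if x < D.K + 2 + 5*m + 3 then D.L else _) = S.L
      rw [if_neg (by rw [hDK]; omega), if_pos (by rw [hDK]; omega)]
      exact hDL
    have hS'ct : ∀ x, S.K + 2 + 5*m + 3 ≤ x → S'.c x = S.L + 1 + m + (x - (S.K + 2 + 5*m + 3))/5 := by
      intro x h1
      exact S'.htail x (by rw [hS'K]; omega)
    refine ⟨S', ?_, by omega, by omega, ?_, e, n, le_max_right _ _, isom_trans he hDi, ?_, ?_⟩
    · intro x hx
      rw [hS'c x (by omega), hDc x hx]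
    · intro x hx
      rcases lt_or_ge x (S.K + 2) with h2 | h2
      · rw [hS'c x (by omega), hDcK x hx h2]
      · rcases lt_or_ge x (S.K + 2 + 5*m) with h3 | h3
        · rw [hS'c x (by omega), hDct x h2]; omega
        · rcases lt_or_ge x (S.K + 2 + 5*m + 3) with h4 | h4
          · rw [hS'cM x h3 h4]
          · rw [hS'ct x h4]; omega
    · rw [hS'K]; omega
    · have hseg : seg (infor (ofFn S'.c)) n = seg (infor (ofFn D.c)) n := by
        apply seg_ext
        intro x hx
        exact hS'c x (by omega)
      rw [hseg]
      exact hN n (le_max_left _ _)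
  choose stepF h1 h2 h3 h4 eF nF h5 h6 h7 h8 using STEP
  let F : ℕ → AState := fun j => Nat.rec initA (fun j S => stepF j S) j
  have hFs : ∀ j, F (j+1) = stepF j (F j) := fun j => rfl
  have hKlt : ∀ j, (F j).K < (F (j+1)).K := by
    intro j; rw [hFs]; exact h2 j (F j)
  have hKge : ∀ j, j ≤ (F j).K := by
    intro j
    induction j with
    | zero => omega
    | succ k ih => have := hKlt k; omega
  have hKmono : ∀ j k, j ≤ k → (F j).K ≤ (F k).K := by
    intro j k hjk
    induction k, hjk using Nat.le_induction with
    | base => exact le_refl _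
    | succ k hk ih => have := hKlt k; omega
  have hLmono : ∀ j k, j ≤ k → (F j).L ≤ (F k).L := by
    intro j k hjk
    induction k, hjk using Nat.le_induction with
    | base => exact le_refl _
    | succ k hk ih => have := h3 k (F k); rw [hFs]; omega
  have hLge : ∀ j, j ≤ (F j).L := by
    intro j
    induction j with
    | zero => omega
    | succ k ih => have := h3 k (F k); rw [hFs]; omega
  have hagree : ∀ j k, j ≤ k → ∀ x, x < (F j).K → (F k).c x = (F j).c x := by
    intro j k hjk
    induction k, hjk using Nat.le_induction with
    | base => intro x _; rfl
    | succ k hk ih =>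
      intro x hx
      rw [hFs, h1 k (F k) x (lt_of_lt_of_le hx (hKmono j k hk)), ih x hx]
  have hlabel : ∀ j k, j ≤ k → ∀ x, (F j).K ≤ x → (F j).L ≤ (F k).c x := by
    intro j k hjk
    induction k, hjk using Nat.le_induction with
    | base =>
      intro x hx
      rw [(F j).htail x hx]; omega
    | succ k hk ih =>
      intro x hx
      rcases lt_or_ge x (F k).K with h | h
      · rw [hFs, h1 k (F k) x h]; exact ih x hx
      · have := h4 k (F k) x h
        have := hLmono j k hk
        rw [hFs]; omega
  set cInf : ℕ → ℕ := fun x => (F (x+1)).c x with hcInf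
  have hstab : ∀ j x, x < (F j).K → cInf x = (F j).c x := by
    intro j x hx
    rcases le_total (x+1) j with h | h
    · exact (hagree (x+1) j h x (lt_of_lt_of_le (Nat.lt_succ_self x) (hKge (x+1)))).symm
    · exact hagree j (x+1) h x hx
  have hfibInf : ∀ i, (cInf ⁻¹' {i}).encard = 5 := by
    intro i
    have hLj : i < (F (i+1)).L := lt_of_lt_of_le (Nat.lt_succ_self i) (hLge (i+1))
    have hset : cInf ⁻¹' {i} = (F (i+1)).c ⁻¹' {i} := by
      ext x
      simp only [Set.mem_preimage, Set.mem_singleton_iff]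
      constructor
      · intro hx
        rcases lt_or_ge x (F (i+1)).K with h | h
        · rw [← hstab (i+1) x h]; exact hx
        · exfalso
          have hj : i + 1 ≤ x + 1 := by have := hKge (i+1); omega
          have := hlabel (i+1) (x+1) hj x h
          rw [show (F (x+1)).c x = cInf x from rfl, hx] at this
          omega
      · intro hx
        have hxK := ((F (i+1)).hfib i hLj).2 (show x ∈ _ from hx)
        simp only [Set.mem_Iio] at hxK
        rw [hstab (i+1) x hxK]; exact hx
    rw [hset]
    exact ((F (i+1)).hfib i hLj).1
  have hcInfA : (ofFn cInf).Isom A := by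
    refine isom_trans (glue ?_) (isom_symm hAc)
    intro i
    exact ⟨5, hfibInf i, c0_fiber_encard i⟩
  obtain ⟨es, hes, Ns, hNs⟩ := hMA (ofFn cInf) hcInfA (infor _) (infor_informant _)
  -- stage Ns
  set j := Ns with hj
  have hseg : seg (infor (ofFn cInf)) (nF j (F j)) = seg (infor (ofFn (F (j+1)).c)) (nF j (F j)) := by
    apply seg_ext
    intro x hx
    have hxK : x < (F (j+1)).K := lt_of_lt_of_le hx (by rw [hFs]; exact h7 j (F j))
    exact hstab (j+1) x hxK
  have hMj : M (seg (infor (ofFn cInf)) (nF j (F j))) = some (eF j (F j)) := by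
    rw [hseg, hFs]
    exact h8 j (F j)
  have hMs : M (seg (infor (ofFn cInf)) (nF j (F j))) = some es :=
    hNs _ (le_trans (le_refl Ns) (h5 j (F j)))
  have heq : es = eF j (F j) := by
    rw [hMj] at hMs
    exact (Option.some.inj hMs).symm
  have hesB : (Me es).Isom B := heq ▸ h6 j (F j)
  have hesA : (Me es).Isom A := isom_trans hes hcInfA
  exact isom_not_AB hA hB (isom_trans (isom_symm hesA) hesB)

end S2


/-- `{[5:ω,2:1], [5:ω]}` is not InfEx-learnable up to isomorphism, but it is
InfEx-learnable up to bi-embeddability, indeed by a constant learner. -/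
theorem stmt2 (Me : ℕ → EqStruct) (A B : EqStruct)
    (hA : ∀ x, (A.classOf x).encard = 5)
    (hB : ∃ a, (B.classOf a).encard = 2 ∧ ∀ x, ¬ B.rel x a → (B.classOf x).encard = 5)
    (he : ∃ e, (Me e).Isom A) :
    (¬ ∃ M : Learner, InfExLearns Me EqStruct.Isom M A ∧ InfExLearns Me EqStruct.Isom M B) ∧
    (∃ M : Learner, (∀ σ τ, M σ = M τ) ∧
      InfExLearns Me EqStruct.Biembed M A ∧ InfExLearns Me EqStruct.Biembed M B) := by
  obtain ⟨e0, he0⟩ := he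
  constructor
  · rintro ⟨M, hMA, hMB⟩
    exact S2.diag Me M A B hA hB hMA hMB
  · refine ⟨fun _ => some e0, fun _ _ => rfl, ?_, ?_⟩
    · intro B' hB' I hI
      refine ⟨e0, ?_, 0, fun n _ => rfl⟩
      have h1 : (Me e0).Isom B' := S2.isom_trans he0 (S2.isom_symm hB')
      exact ⟨S2.isom_embeds h1, S2.isom_embeds (S2.isom_symm h1)⟩
    · intro B' hB' I hI
      refine ⟨e0, ?_, 0, fun n _ => rfl⟩
      have hAc : A.Isom (S2.ofFn S2.c0) := S2.normA A hA
      have hBc : B.Isom (S2.ofFn S2.b0) := S2.normB B hB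
      have e1 : (Me e0).Embeds B' :=
        S2.embeds_trans (S2.isom_embeds (S2.isom_trans he0 hAc))
          (S2.embeds_trans S2.emb_c0_b0
            (S2.isom_embeds (S2.isom_trans (S2.isom_symm hBc) (S2.isom_symm hB'))))
      have e2 : B'.Embeds (Me e0) :=
        S2.embeds_trans (S2.isom_embeds (S2.isom_trans hB' hBc))
          (S2.embeds_trans S2.emb_b0_c0
            (S2.isom_embeds (S2.isom_trans (S2.isom_symm hAc) (S2.isom_symm he0))))
      exact ⟨e1, e2⟩
end

section
/- The family {[ω:1], [ω:2]} (one infinite class vs. two infinite classes) is InfEx_≅-learnable but not TxtEx_≈-learnable: a learner with positive and negative information can identify which structure is presented up to isomorphism, but no learner receiving only positive information can even identify the structure up to bi-embeddability. -/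
open Set

namespace StmtAux

lemma isom_refl (A : EqStruct) : A.Isom A := ⟨id, Function.bijective_id, fun _ _ => Iff.rfl⟩

lemma isom_symm {A B : EqStruct} (h : A.Isom B) : B.Isom A := by
  obtain ⟨f, hf, hrel⟩ := h
  obtain ⟨g, hg1, hg2⟩ := Function.bijective_iff_has_inverse.mp hf
  refine ⟨g, Function.bijective_iff_has_inverse.mpr ⟨f, hg2, hg1⟩, fun x y => ?_⟩
  rw [hrel (g x) (g y), hg2 x, hg2 y]

lemma isom_trans {A B C : EqStruct} (h1 : A.Isom B) (h2 : B.Isom C) : A.Isom C := by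
  obtain ⟨f, hf, hrf⟩ := h1
  obtain ⟨g, hg, hrg⟩ := h2
  exact ⟨g ∘ f, hg.comp hf, fun x y => (hrf x y).trans (hrg (f x) (f y))⟩

lemma embeds_trans {A B C : EqStruct} (h1 : A.Embeds B) (h2 : B.Embeds C) : A.Embeds C := by
  obtain ⟨f, hf, hrf⟩ := h1
  obtain ⟨g, hg, hrg⟩ := h2
  exact ⟨g ∘ f, hg.comp hf, fun x y => (hrf x y).trans (hrg (f x) (f y))⟩

lemma tseg_length (T : ℕ → Option (ℕ × ℕ)) (n : ℕ) : (tseg T n).length = n := by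
  simp [tseg]

lemma tseg_getElem (T : ℕ → Option (ℕ × ℕ)) (n i : ℕ) (h : i < (tseg T n).length) :
    (tseg T n)[i] = T i := by
  simp [tseg] at h ⊢

lemma le_foldr_max (l : List ℕ) : ∀ a ∈ l, a ≤ l.foldr max 0 := by
  induction l with
  | nil => simp
  | cons b l ih =>
    intro a ha
    rcases List.mem_cons.mp ha with h | h
    · subst h; exact le_max_left _ _
    · exact (ih a h).trans (le_max_right _ _)

/-- If `T` agrees with `σ` on an initial segment, long `tseg`s extend `σ`. -/
lemma tseg_prefix (T : ℕ → Option (ℕ × ℕ)) (σ : List (Option (ℕ × ℕ)))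
    (h : ∀ m < σ.length, T m = σ.getD m none) (n : ℕ) (hn : σ.length ≤ n) :
    ∃ τ, tseg T n = σ ++ τ := by
  refine ⟨(tseg T n).drop σ.length, ?_⟩
  conv_lhs => rw [← List.take_append_drop σ.length (tseg T n)]
  congr 1
  apply List.ext_getElem
  · simp [tseg_length]; omega
  · intro i hi hi'
    rw [List.getElem_take]
    have hlt : i < σ.length := hi'
    have : i < (tseg T n).length := by rw [tseg_length]; omega
    rw [tseg_getElem T n i this, h i hlt, List.getD_eq_getElem _ _ hlt]

/-- Any finite sequence extended by an enumeration of all pairs is a text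
for a structure with total relation. -/
lemma text_of_append (A : EqStruct) (hA : ∀ x y, A.rel x y) (σ : List (Option (ℕ × ℕ))) :
    IsText A (fun m => if m < σ.length then σ.getD m none else some (Nat.unpair (m - σ.length))) := by
  intro x y
  constructor
  · intro _
    refine ⟨σ.length + Nat.pair x y, ?_⟩
    simp only [if_neg (by omega : ¬ σ.length + Nat.pair x y < σ.length),
      Nat.add_sub_cancel_left, Nat.unpair_pair]
  · intro _; exact hA x y


lemma exists_locking (Me : ℕ → EqStruct) (A : EqStruct) (hA : ∀ x y, A.rel x y)
    (M : TxtLearner) (hM : TxtExLearns Me EqStruct.Biembed M A) :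
    ∃ σ e, M σ = some e ∧ (Me e).Biembed A ∧ ∀ τ, M (σ ++ τ) = M σ := by
  classical
  have hlock : ∃ σ, ∀ τ, M (σ ++ τ) = M σ := by
    by_contra h
    push_neg at h
    choose τf hτ using h
    set L : ℕ → List (Option (ℕ × ℕ)) := fun n => Nat.rec []
      (fun n l => (l ++ [some (Nat.unpair n)]) ++ τf (l ++ [some (Nat.unpair n)])) n with hL
    have hstep : ∀ n, L (n + 1)
        = (L n ++ [some (Nat.unpair n)]) ++ τf (L n ++ [some (Nat.unpair n)]) := fun n => rfl
    have hpref1 : ∀ n, L n <+: L (n + 1) := by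
      intro n
      rw [hstep n, List.append_assoc]
      exact List.prefix_append _ _
    have hpref : ∀ m n, m ≤ n → L m <+: L n := by
      intro m n hmn
      induction n with
      | zero => simp_all
      | succ n ih =>
        rcases Nat.lt_or_ge m (n + 1) with h' | h'
        · exact (ih (by omega)).trans (hpref1 n)
        · have : m = n + 1 := by omega
          subst this; exact List.prefix_refl _
    have hlen : ∀ n, n ≤ (L n).length := by
      intro n
      induction n with
      | zero => simp
      | succ n ih =>
        have := (hpref1 n).length_le
        rw [hstep n] at *
        simp only [List.length_append, List.length_singleton]
        omega
    set T : ℕ → Option (ℕ × ℕ) := fun m => (L (m + 1)).getD m none with hT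
    have hTget : ∀ n m, m < (L n).length → T m = (L n).getD m none := by
      intro n m hm
      have hm1 : m < (L (m + 1)).length := lt_of_lt_of_le (by omega) (hlen (m + 1))
      show (L (m + 1)).getD m none = (L n).getD m none
      rw [List.getD_eq_getElem _ _ hm1, List.getD_eq_getElem _ _ hm]
      rcases le_total n (m + 1) with h' | h'
      · exact ((hpref n (m + 1) h').getElem hm).symm
      · exact (hpref (m + 1) n h').getElem hm1
    have hseg : ∀ l : List (Option (ℕ × ℕ)), (∃ n, l <+: L n) → tseg T l.length = l := by
      rintro l ⟨n, hp⟩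
      apply List.ext_getElem
      · rw [tseg_length]
      · intro i hi hi'
        rw [tseg_getElem _ _ _ hi]
        have hiln : i < (L n).length := lt_of_lt_of_le hi' hp.length_le
        rw [hTget n i hiln, List.getD_eq_getElem _ _ hiln]
        exact (hp.getElem hi').symm
    have hText : IsText A T := by
      intro x y
      refine ⟨fun _ => ?_, fun _ => hA x y⟩
      set n := Nat.pair x y with hn
      refine ⟨(L n).length, ?_⟩
      have h1 : (L n).length < (L (n + 1)).length := by
        rw [hstep n]; simp only [List.length_append, List.length_singleton]; omega
      rw [hTget (n + 1) _ h1, hstep n]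
      rw [List.getD_eq_getElem _ _ (by simp)]
      rw [List.getElem_append_left (by simp)]
      simp [hn, Nat.unpair_pair]
    obtain ⟨e, _, N, hconv⟩ := hM A (isom_refl A) T hText
    set l' := L N ++ [some (Nat.unpair N)] with hl'
    have hp1 : l' <+: L (N + 1) := by rw [hstep N]; exact List.prefix_append _ _
    have h1 : tseg T l'.length = l' := hseg l' ⟨N + 1, hp1⟩
    have h2 : tseg T (L (N + 1)).length = L (N + 1) := hseg _ ⟨N + 1, List.prefix_refl _⟩
    have hlen1 : N ≤ l'.length := by
      have := hlen N; rw [hl']; simp only [List.length_append, List.length_singleton]; omega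
    have hlen2 : N ≤ (L (N + 1)).length := le_trans (by omega) (hlen (N + 1))
    have e1 := hconv _ hlen1
    have e2 := hconv _ hlen2
    rw [h1] at e1
    rw [h2] at e2
    have := hτ l'
    rw [← hstep N] at this
    rw [e1, e2] at this
    exact this rfl
  obtain ⟨σ, hσ⟩ := hlock
  set T₁ : ℕ → Option (ℕ × ℕ) :=
    fun m => if m < σ.length then σ.getD m none else some (Nat.unpair (m - σ.length)) with hT₁
  obtain ⟨e, he, N, hconv⟩ := hM A (isom_refl A) T₁ (text_of_append A hA σ)
  have hMσ : M σ = some e := by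
    obtain ⟨τ, hτ'⟩ := tseg_prefix T₁ σ (fun m hm => by simp [hT₁, if_pos hm]) (max N σ.length)
      (le_max_right _ _)
    have := hconv (max N σ.length) (le_max_left _ _)
    rw [hτ', hσ τ] at this
    exact this
  exact ⟨σ, e, hMσ, he, hσ⟩

lemma key_rel (B : EqStruct) {a b : ℕ} (hab : ¬ B.rel a b)
    (hcov : ∀ x, B.rel x a ∨ B.rel x b) :
    ∀ u v, B.rel u v ↔ (u ∈ B.classOf b ↔ v ∈ B.classOf b) := by
  have hE := B.equiv
  have hnot : ∀ x, ¬ B.rel b x → B.rel a x := by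
    intro x hx
    rcases hcov x with h | h
    · exact hE.symm h
    · exact absurd (hE.symm h) hx
  intro u v
  simp only [EqStruct.classOf, Set.mem_setOf_eq]
  constructor
  · intro h
    exact ⟨fun h' => hE.trans h' h, fun h' => hE.trans h' (hE.symm h)⟩
  · intro h
    by_cases hu : B.rel b u
    · exact hE.trans (hE.symm hu) (h.mp hu)
    · have hv : ¬ B.rel b v := fun h' => hu (h.mpr h')
      exact hE.trans (hE.symm (hnot u hu)) (hnot v hv)

lemma equiv_of_infinite_sets (S C : Set ℕ) (hS : S.Infinite) (hSc : Sᶜ.Infinite)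
    (hC : C.Infinite) (hCc : Cᶜ.Infinite) :
    ∃ f : ℕ → ℕ, Function.Bijective f ∧ ∀ x, x ∈ S ↔ f x ∈ C := by
  classical
  haveI i1 : Countable ↥S := (Set.to_countable S).to_subtype
  haveI i2 : Infinite ↥S := hS.to_subtype
  haveI i3 : Countable ↥Sᶜ := (Set.to_countable _).to_subtype
  haveI i4 : Infinite ↥Sᶜ := hSc.to_subtype
  haveI i5 : Countable ↥C := (Set.to_countable C).to_subtype
  haveI i6 : Infinite ↥C := hC.to_subtype
  haveI i7 : Countable ↥Cᶜ := (Set.to_countable _).to_subtype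
  haveI i8 : Infinite ↥Cᶜ := hCc.to_subtype
  obtain ⟨d1⟩ := nonempty_denumerable ↥S
  obtain ⟨d2⟩ := nonempty_denumerable ↥Sᶜ
  obtain ⟨d3⟩ := nonempty_denumerable ↥C
  obtain ⟨d4⟩ := nonempty_denumerable ↥Cᶜ
  set e1 : ↥S ≃ ↥C := (@Denumerable.eqv _ d1).trans (@Denumerable.eqv _ d3).symm
  set e2 : ↥Sᶜ ≃ ↥Cᶜ := (@Denumerable.eqv _ d2).trans (@Denumerable.eqv _ d4).symm
  set f : ℕ ≃ ℕ :=
    (Equiv.Set.sumCompl S).symm.trans ((e1.sumCongr e2).trans (Equiv.Set.sumCompl C)) with hf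
  refine ⟨f, f.bijective, fun x => ?_⟩
  by_cases hx : x ∈ S
  · have h1 : (Equiv.Set.sumCompl S).symm x = Sum.inl ⟨x, hx⟩ :=
      Equiv.Set.sumCompl_symm_apply_of_mem hx
    have : f x = ↑(e1 ⟨x, hx⟩) := by
      simp [hf, Equiv.trans_apply, h1]
    rw [this]
    exact iff_of_true hx (e1 ⟨x, hx⟩).2
  · have h1 : (Equiv.Set.sumCompl S).symm x = Sum.inr ⟨x, hx⟩ :=
      Equiv.Set.sumCompl_symm_apply_of_notMem hx
    have : f x = ↑(e2 ⟨x, hx⟩) := by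
      simp [hf, Equiv.trans_apply, h1]
    rw [this]
    exact iff_of_false hx (e2 ⟨x, hx⟩).2

lemma not_txt_learnable (Me : ℕ → EqStruct) (A B : EqStruct)
    (hA : ∀ x y, A.rel x y)
    (hB : ∃ a b, ¬ B.rel a b ∧ (B.classOf a).Infinite ∧ (B.classOf b).Infinite ∧
      ∀ x, B.rel x a ∨ B.rel x b) :
    ¬ ∃ M : TxtLearner, TxtExLearns Me EqStruct.Biembed M A ∧
      TxtExLearns Me EqStruct.Biembed M B := by
  classical
  rintro ⟨M, hMA, hMB⟩
  obtain ⟨a, b, hab, hainf, hbinf, hcov⟩ := hB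
  have hE := B.equiv
  obtain ⟨σ, e, hMσ, hbeA, hσlock⟩ := exists_locking Me A hA M hMA
  -- the bound k
  set pairs : List (ℕ × ℕ) := σ.filterMap id with hpairs
  set k : ℕ := (pairs.map fun p => max p.1 p.2).foldr max 0 + 1 with hk
  have hbound : ∀ p ∈ pairs, p.1 < k ∧ p.2 < k := by
    intro p hp
    have := le_foldr_max (pairs.map fun p => max p.1 p.2) (max p.1 p.2)
      (List.mem_map.mpr ⟨p, hp, rfl⟩)
    constructor <;> omega
  -- the structure B'
  set pos : ℕ → Prop := fun x => k ≤ x ∧ x % 2 = 1 with hpos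
  set B' : EqStruct := ⟨fun x y => (pos x ↔ pos y),
    ⟨fun _ => Iff.rfl, fun h => h.symm, fun h1 h2 => h1.trans h2⟩⟩ with hB'
  have hB'rel : ∀ x y, B'.rel x y ↔ (pos x ↔ pos y) := fun _ _ => Iff.rfl
  -- B' is isomorphic to B
  have hcompl : (B.classOf b)ᶜ = B.classOf a := by
    ext x
    simp only [EqStruct.classOf, Set.mem_compl_iff, Set.mem_setOf_eq]
    constructor
    · intro hx
      rcases hcov x with h | h
      · exact hE.symm h
      · exact absurd (hE.symm h) hx
    · intro hx hx'
      exact hab (hE.trans hx (hE.symm hx'))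
  have hSinf : {x | pos x}.Infinite := by
    apply Set.infinite_of_injective_forall_mem (f := fun n : ℕ => 2 * (n + k) + 1)
    · intro u v huv; simp only at huv; omega
    · intro n; simp only [Set.mem_setOf_eq, hpos]; omega
  have hScinf : {x | pos x}ᶜ.Infinite := by
    apply Set.infinite_of_injective_forall_mem (f := fun n : ℕ => 2 * (n + k))
    · intro u v huv; simp only at huv; omega
    · intro n; simp only [Set.mem_compl_iff, Set.mem_setOf_eq, hpos]; omega
  obtain ⟨f, hfbij, hfmem⟩ := equiv_of_infinite_sets {x | pos x} (B.classOf b)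
    hSinf hScinf hbinf (by rw [hcompl]; exact hainf)
  have hIsomB' : B'.Isom B := by
    refine ⟨f, hfbij, fun x y => ?_⟩
    rw [hB'rel, key_rel B hab hcov]
    exact iff_congr (hfmem x) (hfmem y)
  -- the text T₂
  set T₂ : ℕ → Option (ℕ × ℕ) := fun m =>
    if m < σ.length then σ.getD m none
    else if pos (Nat.unpair (m - σ.length)).1 ↔ pos (Nat.unpair (m - σ.length)).2 then
      some (Nat.unpair (m - σ.length)) else none with hT₂
  have hText₂ : IsText B' T₂ := by
    intro x y
    constructor
    · intro h
      refine ⟨σ.length + Nat.pair x y, ?_⟩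
      rw [hT₂]
      simp only [if_neg (by omega : ¬ σ.length + Nat.pair x y < σ.length),
        Nat.add_sub_cancel_left, Nat.unpair_pair]
      rw [if_pos h]
    · rintro ⟨n, hn⟩
      rw [hT₂] at hn
      simp only at hn
      by_cases h : n < σ.length
      · rw [if_pos h] at hn
        have hmem : some (x, y) ∈ σ := by
          rw [List.getD_eq_getElem _ _ h] at hn
          exact hn ▸ List.getElem_mem h
        have hpmem : (x, y) ∈ pairs := by
          rw [hpairs]
          exact List.mem_filterMap.mpr ⟨some (x, y), hmem, rfl⟩
        obtain ⟨hx, hy⟩ := hbound _ hpmem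
        rw [hB'rel]
        exact iff_of_false (fun hh => by simp only [hpos] at hh; omega)
          (fun hh => by simp only [hpos] at hh; omega)
      · rw [if_neg h] at hn
        split_ifs at hn with h'
        · have hp := Option.some.inj hn
          rw [hp] at h'
          exact h'
  -- M converges to e on T₂
  have hconv₂ : ∀ n, σ.length ≤ n → M (tseg T₂ n) = M σ := by
    intro n hn
    obtain ⟨τ, hτ'⟩ := tseg_prefix T₂ σ (fun m hm => by rw [hT₂]; simp [if_pos hm]) n hn
    rw [hτ', hσlock τ]
  obtain ⟨e', hbe', N', hc⟩ := hMB B' hIsomB' T₂ hText₂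
  have hee : e' = e := by
    have h1 := hc (max N' σ.length) (le_max_left _ _)
    rw [hconv₂ _ (le_max_right _ _), hMσ] at h1
    exact (Option.some.inj h1).symm
  rw [hee] at hbe'
  -- contradiction: B' embeds into A, but A is total and B' is not
  have hemb : B'.Embeds A := embeds_trans hbe'.2 hbeA.1
  obtain ⟨g, _, hgr⟩ := hemb
  have := (hgr 0 (2 * k + 1)).mpr (hA _ _)
  rw [hB'rel] at this
  have h0 : ¬ pos 0 := by simp only [hpos]; omega
  have h1 : pos (2 * k + 1) := by simp only [hpos]; omega
  exact h0 (this.mpr h1)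

lemma part1 (Me : ℕ → EqStruct) (A B : EqStruct)
    (hA : ∀ x y, A.rel x y)
    (hB : ∃ a b, ¬ B.rel a b ∧ (B.classOf a).Infinite ∧ (B.classOf b).Infinite ∧
      ∀ x, B.rel x a ∨ B.rel x b)
    (heA : ∃ e, (Me e).Isom A) (heB : ∃ e, (Me e).Isom B) :
    ∃ M : Learner, InfExLearns Me EqStruct.Isom M A ∧ InfExLearns Me EqStruct.Isom M B := by
  classical
  obtain ⟨eA, heA'⟩ := heA
  obtain ⟨eB, heB'⟩ := heB
  refine ⟨fun σ => if σ.any (fun p => !p.2) then some eB else some eA, ?_, ?_⟩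
  · intro B₁ hIsom I hI
    refine ⟨eA, isom_trans heA' (isom_symm hIsom), 0, fun n _ => ?_⟩
    have htot : ∀ x y, B₁.rel x y := by
      obtain ⟨f, _, hf⟩ := hIsom
      intro x y; exact (hf x y).mpr (hA _ _)
    have hany : (seg I n).any (fun p => !p.2) = false := by
      rw [List.any_eq_false]
      intro p hp
      obtain ⟨m, _, rfl⟩ := List.mem_map.mp hp
      have : (I m).2 = true := (hI.2 m).mpr (htot _ _)
      simp [this]
    simp [hany]
  · intro B₁ hIsom I hI
    obtain ⟨a, b, hab, -, -, -⟩ := hB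
    obtain ⟨f, hfbij, hf⟩ := hIsom
    obtain ⟨a', ha'⟩ := hfbij.2 a
    obtain ⟨b', hb'⟩ := hfbij.2 b
    have hnrel : ¬ B₁.rel a' b' := fun h => hab (ha' ▸ hb' ▸ (hf a' b').mp h)
    obtain ⟨n, hn⟩ := hI.1 (a', b')
    have hfalse : (I n).2 = false := by
      cases h : (I n).2
      · rfl
      · have := (hI.2 n).mp h
        rw [hn] at this
        exact absurd this hnrel
    refine ⟨eB, isom_trans heB' (isom_symm ⟨f, hfbij, hf⟩), n + 1, fun m hm => ?_⟩
    have hany : (seg I m).any (fun p => !p.2) = true := by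
      rw [List.any_eq_true]
      exact ⟨I n, List.mem_map.mpr ⟨n, List.mem_range.mpr (by omega), rfl⟩, by simp [hfalse]⟩
    simp [hany]

end StmtAux

/-- `{[ω:1], [ω:2]}` is InfEx-learnable up to isomorphism but not
TxtEx-learnable even up to bi-embeddability. -/
theorem stmt3 (Me : ℕ → EqStruct) (A B : EqStruct)
    (hA : ∀ x y, A.rel x y)
    (hB : ∃ a b, ¬ B.rel a b ∧ (B.classOf a).Infinite ∧ (B.classOf b).Infinite ∧
      ∀ x, B.rel x a ∨ B.rel x b)
    (heA : ∃ e, (Me e).Isom A) (heB : ∃ e, (Me e).Isom B) :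
    (∃ M : Learner, InfExLearns Me EqStruct.Isom M A ∧ InfExLearns Me EqStruct.Isom M B) ∧
    ¬ ∃ M : TxtLearner, TxtExLearns Me EqStruct.Biembed M A ∧
      TxtExLearns Me EqStruct.Biembed M B :=
  ⟨StmtAux.part1 Me A B hA hB heA heB, StmtAux.not_txt_learnable Me A B hA hB⟩
end

section
/- (Locking normal form) Let ∼ be any equivalence relation on equivalence structures and let M be any InfEx_∼-learner. Then there exists an informant-locking learner M′ that InfEx_∼-learns every structure that M learns; that is, for every structure A learned by M and every informant I for A, there is n such that I[n] is a weak locking sequence for M′ on A. -/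
open Set

namespace Stmt8

open Classical

abbrev Entry := (ℕ × ℕ) × Bool

/-- correctly labelled entries for `B` -/
def Good (B : EqStruct) : Set Entry := {e | e.2 = true ↔ B.rel e.1.1 e.1.2}

noncomputable def lbl (B : EqStruct) (p : ℕ × ℕ) : Bool :=
  if B.rel p.1 p.2 then true else false

lemma lbl_mem_good (B : EqStruct) (p : ℕ × ℕ) : (p, lbl B p) ∈ Good B := by
  simp only [Good, lbl, Set.mem_setOf_eq]
  by_cases h : B.rel p.1 p.2 <;> simp [h]

/-- `π` is a weak locking sequence for `M` relative to content set `S`. -/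
def Lock (M : Learner) (S : Set Entry) (π : List Entry) : Prop :=
  (∀ x ∈ π, x ∈ S) ∧ ∀ τ, π <+: τ → (∀ x ∈ τ, x ∈ S) → M τ = M π

/-- a mind-change witness extension, if one exists -/
noncomputable def wit (M : Learner) (G : Set Entry) (π : List Entry) : List Entry :=
  if h : ∃ τ, π <+: τ ∧ (∀ x ∈ τ, x ∈ G) ∧ M τ ≠ M π then h.choose else []

lemma wit_good (M : Learner) (G : Set Entry) (π : List Entry) :
    ∀ x ∈ wit M G π, x ∈ G := by
  unfold wit
  split
  · next h => exact h.choose_spec.2.1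
  · simp

lemma wit_spec {M : Learner} {G : Set Entry} {π : List Entry}
    (hπ : ∀ x ∈ π, x ∈ G) (hno : ¬ Lock M G π) :
    π <+: wit M G π ∧ (∀ x ∈ wit M G π, x ∈ G) ∧ M (wit M G π) ≠ M π := by
  have h : ∃ τ, π <+: τ ∧ (∀ x ∈ τ, x ∈ G) ∧ M τ ≠ M π := by
    unfold Lock at hno
    push_neg at hno
    obtain ⟨τ, h1, h2, h3⟩ := hno hπ
    exact ⟨τ, h1, h2, h3⟩
  rw [wit, dif_pos h]
  exact h.choose_spec

/-- the lock with least code, if any; else `[]`. -/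
noncomputable def pick (M : Learner) (S : Set Entry) : List Entry :=
  if h : ∃ π, Lock M S π then
    (Nat.find_spec (h.elim (fun π hπ => ⟨Encodable.encode π, π, hπ, rfl⟩) :
      ∃ n, ∃ π : List Entry, Lock M S π ∧ Encodable.encode π = n)).choose
  else []

lemma pick_spec {M : Learner} {S : Set Entry} (h : ∃ π, Lock M S π) :
    Lock M S (pick M S) ∧
      ∀ π, Lock M S π → Encodable.encode (pick M S) ≤ Encodable.encode π := by
  rw [pick, dif_pos h]
  set h' : ∃ n, ∃ π : List Entry, Lock M S π ∧ Encodable.encode π = n :=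
    h.elim (fun π hπ => ⟨Encodable.encode π, π, hπ, rfl⟩) with hh'
  obtain ⟨hl, he⟩ := (Nat.find_spec h').choose_spec
  refine ⟨hl, fun π hπ => ?_⟩
  rw [he]
  exact Nat.find_min' h' ⟨π, hπ, rfl⟩

lemma pick_eq_of {M : Learner} {S : Set Entry} {π' : List Entry}
    (h1 : Lock M S π')
    (h2 : ∀ π, Encodable.encode π < Encodable.encode π' → ¬ Lock M S π) :
    pick M S = π' := by
  have hex : ∃ π, Lock M S π := ⟨π', h1⟩
  obtain ⟨hl, hmin⟩ := pick_spec hex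
  have hle := hmin π' h1
  rcases lt_or_eq_of_le hle with hlt | heq
  · exact absurd hl (h2 _ hlt)
  · exact Encodable.encode_injective heq

/-- Sandwich lemma: if `S` contains the minimal `G`-lock `π*` and all its
disqualifying witnesses, and `S ⊆ G`, then `pick M S = π*`. -/
lemma pick_sandwich {M : Learner} {G : Set Entry} {πs : List Entry}
    (hG : Lock M G πs)
    (hmin : ∀ π, Lock M G π → Encodable.encode πs ≤ Encodable.encode π)
    {S : Set Entry}
    (hS1 : ∀ x ∈ πs, x ∈ S)
    (hS2 : ∀ π : List Entry, Encodable.encode π < Encodable.encode πs →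
      ∀ x ∈ wit M G π, x ∈ S)
    (hSG : S ⊆ G) : pick M S = πs := by
  apply pick_eq_of
  · exact ⟨hS1, fun τ hpre hτ => hG.2 τ hpre (fun x hx => hSG (hτ x hx))⟩
  · intro π hlt hLS
    have hnG : ¬ Lock M G π := fun h => absurd hlt (not_lt.2 (hmin π h))
    have hπG : ∀ x ∈ π, x ∈ G := fun x hx => hSG (hLS.1 x hx)
    obtain ⟨hw1, _, hw3⟩ := wit_spec hπG hnG
    exact hw3 (hLS.2 _ hw1 (hS2 π hlt))

/-- length of seg -/
lemma seg_length (I : ℕ → Entry) (n : ℕ) : (seg I n).length = n := by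
  simp [seg]

lemma mem_seg {I : ℕ → Entry} {n : ℕ} {x : Entry} :
    x ∈ seg I n ↔ ∃ m < n, I m = x := by
  simp [seg, eq_comm]

lemma seg_getElem (I : ℕ → Entry) {n j : ℕ} (h : j < n) :
    (seg I n)[j]'(by simpa [seg_length]) = I j := by
  simp [seg]

lemma seg_prefix (I : ℕ → Entry) {a b : ℕ} (h : a ≤ b) :
    seg I a <+: seg I b := by
  have : seg I a = (seg I b).take a := by
    simp only [seg, ← List.map_take, List.take_range, min_eq_left h]
  rw [this]
  exact List.take_prefix _ _

lemma informant_mem_good {B : EqStruct} {I : ℕ → Entry} (hI : IsInformant B I)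
    (n : ℕ) : I n ∈ Good B := hI.2 n

lemma informant_hits {B : EqStruct} {I : ℕ → Entry} (hI : IsInformant B I)
    {x : Entry} (hx : x ∈ Good B) : ∃ m, I m = x := by
  obtain ⟨m, hm⟩ := hI.1 x.1
  refine ⟨m, ?_⟩
  have h2 : (I m).2 = x.2 := by
    have h1 := hI.2 m
    rw [hm] at h1
    have h2 := hx
    simp only [Good, Set.mem_setOf_eq] at h2
    rcases Bool.eq_false_or_eq_true (I m).2 with h | h <;>
      rcases Bool.eq_false_or_eq_true x.2 with h' | h' <;>
      simp_all
  exact Prod.ext hm h2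

/-- Existence of a weak locking sequence (Blum–Blum style). -/
lemma exists_lock {M : Learner} {B : EqStruct}
    (hMB : ∀ I, IsInformant B I → ∃ e, ∃ N, ∀ n ≥ N, M (seg I n) = some e) :
    ∃ π, Lock M (Good B) π := by
  by_contra hno
  push_neg at hno
  set G := Good B with hG
  -- build a diverging informant
  let f : ℕ → List Entry := fun k => Nat.rec [] (fun k σ =>
    wit M G σ ++ [(Nat.unpair k, lbl B (Nat.unpair k))]) k
  have hf0 : f 0 = [] := rfl
  have hfs : ∀ k, f (k+1) = wit M G (f k) ++ [(Nat.unpair k, lbl B (Nat.unpair k))] :=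
    fun k => rfl
  have hgood : ∀ k, ∀ x ∈ f k, x ∈ G := by
    intro k
    induction k with
    | zero => simp [hf0]
    | succ k ih =>
      rw [hfs]
      intro x hx
      rcases List.mem_append.1 hx with h | h
      · exact wit_good M G (f k) x h
      · simp only [List.mem_singleton] at h
        subst h
        exact lbl_mem_good B _
  have hstep : ∀ k, f k <+: wit M G (f k) ∧ M (wit M G (f k)) ≠ M (f k) := by
    intro k
    obtain ⟨h1, _, h3⟩ := wit_spec (hgood k) (hno (f k))
    exact ⟨h1, h3⟩
  have hpref : ∀ k, f k <+: f (k+1) := by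
    intro k
    rw [hfs]
    exact (hstep k).1.trans (List.prefix_append _ _)
  have hlen : ∀ k, (f k).length < (f (k+1)).length := by
    intro k
    have h1 := (hstep k).1.length_le
    rw [hfs, List.length_append, List.length_singleton]
    omega
  have hchain : ∀ j k, j ≤ k → f j <+: f k := by
    intro j k h
    induction k with
    | zero => rw [Nat.le_zero.1 h]
    | succ k ih =>
      rcases eq_or_lt_of_le h with h' | h'
      · rw [h']
      · exact (ih (Nat.lt_succ_iff.1 h')).trans (hpref k)
  have hflen : ∀ k, k ≤ (f k).length := by
    intro k
    induction k with
    | zero => exact Nat.zero_le _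
    | succ k ih => exact Nat.succ_le_of_lt (lt_of_le_of_lt ih (hlen k))
  -- the informant
  set I : ℕ → Entry := fun n => (f (n+1)).getD n ((0,0), true) with hIdef
  have hIval : ∀ m j, (hj : j < (f m).length) → I j = (f m)[j] := by
    intro m j hj
    have hj1 : j < (f (j+1)).length := hflen (j+1)
    have hIj : I j = (f (j+1))[j] := List.getD_eq_getElem _ _ hj1
    rcases le_total m (j+1) with h | h
    · rw [hIj, ← (hchain m (j+1) h).getElem hj]
    · rw [hIj, (hchain (j+1) m h).getElem hj1]
  have hseg : ∀ σ m, σ <+: f m → seg I σ.length = σ := by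
    intro σ m hσ
    apply List.ext_getElem (by simp [seg_length])
    intro j h1 h2
    rw [seg_length] at *
    rw [seg_getElem I h2, hIval m j (lt_of_lt_of_le h2 hσ.length_le), hσ.getElem h2]
  have hI : IsInformant B I := by
    constructor
    · intro p
      set k := Nat.pair p.1 p.2 with hk
      have hlenw : (wit M G (f k)).length < (f (k+1)).length := by
        rw [hfs, List.length_append, List.length_singleton]; omega
      refine ⟨(wit M G (f k)).length, ?_⟩
      have : I (wit M G (f k)).length = (f (k+1))[(wit M G (f k)).length] :=
        hIval (k+1) _ hlenw
      rw [this]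
      have : (f (k+1))[(wit M G (f k)).length]'hlenw
          = (Nat.unpair k, lbl B (Nat.unpair k)) := by
        simp [hfs k]
      rw [this]
      simp [hk, Nat.unpair_pair]
    · intro n
      have h1 : I n = (f (n+1))[n]'(hflen (n+1)) := hIval (n+1) n (hflen (n+1))
      have h2 : I n ∈ G := by
        rw [h1]; exact hgood (n+1) _ (List.getElem_mem _)
      exact h2
  obtain ⟨e, N, hconv⟩ := hMB I hI
  have hNle : N ≤ (f N).length := hflen N
  have h1 : M (seg I (f N).length) = some e := hconv _ hNle
  have h2 : M (seg I (wit M G (f N)).length) = some e := by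
    apply hconv
    exact le_trans hNle (hstep N).1.length_le
  rw [hseg (f N) N (List.prefix_refl _)] at h1
  rw [hseg (wit M G (f N)) (N+1) (by rw [hfs]; exact List.prefix_append _ _)] at h2
  exact (hstep N).2 (h2.trans h1.symm)

/-- The output of a weak locking sequence is a correct hypothesis. -/
lemma lock_correct {M : Learner} {Me : ℕ → EqStruct} {sim : EqStruct → EqStruct → Prop}
    {B : EqStruct}
    (hMB : ∀ I, IsInformant B I →
      ∃ e, sim (Me e) B ∧ ∃ N, ∀ n ≥ N, M (seg I n) = some e)
    {π : List Entry} (hπ : Lock M (Good B) π) :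
    ∃ e, M π = some e ∧ sim (Me e) B := by
  classical
  set I : ℕ → Entry := fun n => if h : n < π.length then π[n]
    else (Nat.unpair (n - π.length), lbl B (Nat.unpair (n - π.length))) with hIdef
  have hIG : ∀ n, I n ∈ Good B := by
    intro n
    by_cases h : n < π.length
    · simpa [hIdef, h] using hπ.1 _ (List.getElem_mem h)
    · simp only [hIdef, dif_neg h]
      exact lbl_mem_good B _
  have hI : IsInformant B I := by
    constructor
    · intro p
      refine ⟨π.length + Nat.pair p.1 p.2, ?_⟩
      have h : ¬ (π.length + Nat.pair p.1 p.2 < π.length) := by omega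
      simp [hIdef, h, Nat.unpair_pair]
    · exact fun n => hIG n
  have hsegπ : seg I π.length = π := by
    apply List.ext_getElem (by simp [seg_length])
    intro j h1 h2
    rw [seg_length] at h1
    rw [seg_getElem I h1]
    simp [hIdef, h1]
  obtain ⟨e, hsim, N, hconv⟩ := hMB I hI
  refine ⟨e, ?_, hsim⟩
  have hn : M (seg I (max N π.length)) = some e := hconv _ (le_max_left _ _)
  have hpre : π <+: seg I (max N π.length) := by
    have h := seg_prefix I (le_max_right N π.length)
    rwa [hsegπ] at h
  have hc : ∀ x ∈ seg I (max N π.length), x ∈ Good B := by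
    intro x hx
    obtain ⟨m, _, hm⟩ := mem_seg.1 hx
    rw [← hm]; exact hIG m
  rw [← hπ.2 _ hpre hc]
  exact hn

/-- the locking learner -/
noncomputable def M' (M : Learner) : Learner := fun σ => M (pick M {x | x ∈ σ})

/-- all that we need, per structure `B` and informant `I`. -/
lemma main {M : Learner} {Me : ℕ → EqStruct} {sim : EqStruct → EqStruct → Prop}
    {B : EqStruct}
    (hMB : ∀ I, IsInformant B I →
      ∃ e, sim (Me e) B ∧ ∃ N, ∀ n ≥ N, M (seg I n) = some e)
    {I : ℕ → Entry} (hI : IsInformant B I) :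
    ∃ e, sim (Me e) B ∧ ∃ N, ∀ n ≥ N,
      (∀ τ, seg I n <+: τ → (∀ x ∈ τ, x ∈ Good B) → M' M τ = some e) := by
  classical
  have hex : ∃ π, Lock M (Good B) π :=
    exists_lock (fun J hJ => (hMB J hJ).imp (fun e he => he.2))
  obtain ⟨hLs, hmins⟩ := pick_spec hex
  set πs := pick M (Good B) with hπs
  obtain ⟨e, heq, hsim⟩ := lock_correct hMB hLs
  -- the finite set of entries we must see
  set T : Set Entry := {x | x ∈ πs} ∪
    ⋃ π ∈ {π : List Entry | Encodable.encode π < Encodable.encode πs},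
      {x | x ∈ wit M (Good B) π} with hT
  have hTfin : T.Finite := by
    apply Set.Finite.union (List.finite_toSet _)
    apply Set.Finite.biUnion
    · have : {π : List Entry | Encodable.encode π < Encodable.encode πs} =
        Encodable.encode ⁻¹' (Set.Iio (Encodable.encode πs)) := rfl
      rw [this]
      exact Set.Finite.preimage (Encodable.encode_injective.injOn) (Set.finite_Iio _)
    · exact fun π _ => List.finite_toSet _
  have hTG : ∀ x ∈ T, x ∈ Good B := by
    intro x hx
    rcases hx with hx | hx
    · exact hLs.1 x hx
    · simp only [Set.mem_iUnion] at hx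
      obtain ⟨π, _, hx⟩ := hx
      exact wit_good M (Good B) π x hx
  -- a uniform bound after which all of T appears in seg I n
  have hbound : ∃ N, ∀ n ≥ N, ∀ x ∈ T, x ∈ seg I n := by
    have gen : ∀ s : Set Entry, s.Finite → (∀ x ∈ s, x ∈ Good B) →
        ∃ N, ∀ n ≥ N, ∀ x ∈ s, x ∈ seg I n := by
      intro s hs
      refine Set.Finite.induction_on
        (motive := fun s _ => (∀ x ∈ s, x ∈ Good B) →
          ∃ N, ∀ n ≥ N, ∀ x ∈ s, x ∈ seg I n) s hs (fun _ => ⟨0, by simp⟩) ?_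
      rintro a t ha htf ih hG
      obtain ⟨N, hN⟩ := ih (fun x hx => hG x (Set.mem_insert_of_mem a hx))
      obtain ⟨m, hm⟩ := informant_hits hI (hG a (Set.mem_insert a t))
      refine ⟨max N (m+1), fun n hn x hx => ?_⟩
      rw [Set.mem_insert_iff] at hx
      rcases hx with rfl | hx
      · exact mem_seg.2 ⟨m, by omega, hm⟩
      · exact hN n (by omega) x hx
    exact gen T hTfin hTG
  obtain ⟨N, hN⟩ := hbound
  refine ⟨e, hsim, N, fun n hn τ hpre hτG => ?_⟩
  have hps : pick M {x | x ∈ τ} = πs := by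
    apply pick_sandwich hLs hmins
    · intro x hx
      exact hpre.subset (hN n hn x (Or.inl hx))
    · intro π hlt x hx
      refine hpre.subset (hN n hn x (Or.inr ?_))
      simp only [Set.mem_iUnion]
      exact ⟨π, hlt, hx⟩
    · exact hτG
  rw [M', hps, heq]

/-- key consequence: `M'` converges and locks. -/
lemma seg_good {B : EqStruct} {I : ℕ → Entry} (hI : IsInformant B I) (n : ℕ) :
    ∀ x ∈ seg I n, x ∈ Good B := by
  intro x hx
  obtain ⟨m, _, hm⟩ := mem_seg.1 hx
  rw [← hm]; exact informant_mem_good hI m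

lemma describes_good {A : EqStruct} {τ : List Entry} (h : DescribesPart A τ) :
    ∀ x ∈ τ, x ∈ Good A := by
  obtain ⟨I, hI, hτ⟩ := h
  rw [hτ]
  exact seg_good hI _

lemma isom_refl (A : EqStruct) : A.Isom A :=
  ⟨id, Function.bijective_id, fun _ _ => Iff.rfl⟩

end Stmt8


/-- locking normal form: any InfEx-learner `M` can be replaced by an
informant-locking learner `M'` learning every structure that `M` learns. -/
theorem stmt8 (Me : ℕ → EqStruct) (sim : EqStruct → EqStruct → Prop) (M : Learner) :
    ∃ M' : Learner, ∀ A : EqStruct, InfExLearns Me sim M A →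
      (InfExLearns Me sim M' A ∧
        ∀ I, IsInformant A I →
          ∃ n, ∀ τ, seg I n <+: τ → DescribesPart A τ → M' τ = M' (seg I n)) := by
  classical
  refine ⟨Stmt8.M' M, fun A hA => ?_⟩
  constructor
  · intro B hB I hI
    have hMB : ∀ J, IsInformant B J →
        ∃ e, sim (Me e) B ∧ ∃ N, ∀ n ≥ N, M (seg J n) = some e :=
      fun J hJ => hA B hB J hJ
    obtain ⟨e, hsim, N, h⟩ := Stmt8.main hMB hI
    exact ⟨e, hsim, N, fun n hn =>
      h n hn (seg I n) (List.prefix_refl _) (Stmt8.seg_good hI n)⟩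
  · intro I hI
    have hMB : ∀ J, IsInformant A J →
        ∃ e, sim (Me e) A ∧ ∃ N, ∀ n ≥ N, M (seg J n) = some e :=
      fun J hJ => hA A (Stmt8.isom_refl A) J hJ
    obtain ⟨e, hsim, N, h⟩ := Stmt8.main hMB hI
    refine ⟨N, fun τ hpre hdesc => ?_⟩
    rw [h N le_rfl τ hpre (Stmt8.describes_good hdesc),
        h N le_rfl (seg I N) (List.prefix_refl _) (Stmt8.seg_good hI N)]
end
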